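/- arXiv:2001.08493 — 5 statements merged into one kernel-verified Lean document; each statement's English description precedes it below -/
import Mathlib

section
/- Let v be a vertex of a CAT(0) cube complex X with W_v finite. Then there exists a vertex w ≠ v with W_v ⊆ W_w if and only if the link of v is a cone, i.e. there is a hyperplane in W_v transverse to every other hyperplane in W_v. -/
open SimpleGraph

variable {V : Type*}

/-- A median graph: combinatorial model of (the 1-skeleton of) a CAT(0) cube complex. -/
def IsMedianGraph (G : SimpleGraph V) : Prop :=
  G.Connected ∧ ∀ x y z : V, ∃! m : V,
    G.dist x m + G.dist m y = G.dist x y ∧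
    G.dist x m + G.dist m z = G.dist x z ∧
    G.dist y m + G.dist m z = G.dist y z

/-- Djoković–Winkler relation on oriented edges of a median graph; hyperplanes are its classes. -/
def Theta (G : SimpleGraph V) (e f : V × V) : Prop :=
  G.dist e.1 f.1 + G.dist e.2 f.2 ≠ G.dist e.1 f.2 + G.dist e.2 f.1

/-- A hyperplane, identified with the set of (oriented) edges crossing it. -/
def IsHyperplane (G : SimpleGraph V) (h : Set (V × V)) : Prop :=
  ∃ e : V × V, G.Adj e.1 e.2 ∧ h = {f | G.Adj f.1 f.2 ∧ Theta G e f}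

/-- The hyperplane `h` is adjacent to the vertex `v` (i.e. `v` lies in the carrier of `h`). -/
def AdjTo (G : SimpleGraph V) (h : Set (V × V)) (v : V) : Prop :=
  ∃ e ∈ h, e.1 = v ∨ e.2 = v

/-- `Wv G v`: the set of hyperplanes adjacent to `v`. -/
def Wv (G : SimpleGraph V) (v : V) : Set (Set (V × V)) :=
  {h | IsHyperplane G h ∧ AdjTo G h v}

/-- Two hyperplanes are in contact if their carriers share a vertex. -/
def Contact (G : SimpleGraph V) (h h' : Set (V × V)) : Prop :=
  ∃ v : V, AdjTo G h v ∧ AdjTo G h' v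

/-- Two hyperplanes are transverse if they cross a common square. -/
def Transverse (G : SimpleGraph V) (h h' : Set (V × V)) : Prop :=
  ∃ a b c d : V, (a, b) ∈ h ∧ (c, d) ∈ h ∧ (a, c) ∈ h' ∧ (b, d) ∈ h' ∧
    G.Adj a b ∧ G.Adj c d ∧ G.Adj a c ∧ G.Adj b d

/-- A clique in the contact graph: a set of hyperplanes whose carriers pairwise intersect. -/
def IsContactClique (G : SimpleGraph V) (C : Set (Set (V × V))) : Prop :=
  (∀ h ∈ C, IsHyperplane G h) ∧ ∀ h ∈ C, ∀ h' ∈ C, h ≠ h' → Contact G h h'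

/-- A maximal clique in the contact graph. -/
def IsMaxContactClique (G : SimpleGraph V) (C : Set (Set (V × V))) : Prop :=
  IsContactClique G C ∧ ∀ C', IsContactClique G C' → C ⊆ C' → C' = C

/-- The link of `v` is a cone, i.e. `v` is an extremal vertex. -/
def LinkIsCone (G : SimpleGraph V) (v : V) : Prop :=
  ∃ h ∈ Wv G v, ∀ h' ∈ Wv G v, h' ≠ h → Transverse G h h'

/-- Uniform local finiteness. -/
def UnifLocFinite (G : SimpleGraph V) : Prop :=
  ∃ N : ℕ, ∀ v : V, (G.neighborSet v).Finite ∧ (G.neighborSet v).ncard ≤ N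

abbrev Hyp (G : SimpleGraph V) := {h : Set (V × V) // IsHyperplane G h}

/-- The contact graph `𝒞(X)`. -/
def contactGraph (G : SimpleGraph V) : SimpleGraph (Hyp G) where
  Adj h h' := h ≠ h' ∧ Contact G h.1 h'.1
  symm := by
    constructor
    rintro h h' ⟨hne, v, hv, hv'⟩
    exact ⟨hne.symm, v, hv', hv⟩
  loopless := by constructor; rintro h ⟨hne, -⟩; exact hne rfl

/-- `Ical G w` = I(w): the hyperplanes whose carrier contains the carrier of `w`,
i.e. the intersection of the sets `Wv G v` over all vertices `v` adjacent to `w`. -/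
def Ical (G : SimpleGraph V) (w : Set (V × V)) : Set (Set (V × V)) :=
  {u | IsHyperplane G u ∧ ∀ v : V, AdjTo G w v → AdjTo G u v}

/-- `Ical0 G w` = I⁰(w): the hyperplanes with the same carrier as `w`. -/
def Ical0 (G : SimpleGraph V) (w : Set (V × V)) : Set (Set (V × V)) :=
  {u | u ∈ Ical G w ∧ w ∈ Ical G u}

/-- The action of a cubical automorphism on sets of edges (e.g. hyperplanes). -/
def hmap (G : SimpleGraph V) (φ : G ≃g G) (h : Set (V × V)) : Set (V × V) :=
  (fun e : V × V => (φ e.1, φ e.2)) '' h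

/-- `π` is the vertex permutation induced by the contact-graph automorphism `ψ` via the
correspondence between vertices and maximal cliques (`ρ(ψ) = π`). -/
def InducesPerm (G : SimpleGraph V) (ψ : contactGraph G ≃g contactGraph G)
    (π : Equiv.Perm V) : Prop :=
  ∀ (v : V) (h : Hyp G), h.1 ∈ Wv G v ↔ (ψ h).1 ∈ Wv G (π v)

/-- The hyperplane `u` is adjacent, inside the cube complex structure of a hyperplane `w`,
to the vertex of `w` given by the edge `e ∈ w`: `u` crosses a square containing `e`. -/
def HypAdjEdge (G : SimpleGraph V) (u : Set (V × V)) (e : V × V) : Prop :=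
  ∃ c d : V, (e.1, c) ∈ u ∧ (e.2, d) ∈ u ∧ G.Adj c d

/-- The link, in the cube complex structure of hyperplane `w`, of the vertex given by
`e ∈ w` is a cone (i.e. this vertex of `w` is extremal). -/
def HypLinkCone (G : SimpleGraph V) (w : Set (V × V)) (e : V × V) : Prop :=
  ∃ u, IsHyperplane G u ∧ u ≠ w ∧ HypAdjEdge G u e ∧
    ∀ u', IsHyperplane G u' → u' ≠ w → HypAdjEdge G u' e → u' ≠ u → Transverse G u u'

/-- No hyperplane of `X` has an extremal vertex. -/
def NoHypExtremalVertex (G : SimpleGraph V) : Prop :=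
  ∀ w, IsHyperplane G w → ∀ e ∈ w, ¬ HypLinkCone G w e

section Aux
variable {G : SimpleGraph V}

private lemma med_grad (hG : IsMedianGraph G) {a b : V} (hab : G.Adj a b) (x : V) :
    G.dist x b = G.dist x a + 1 ∨ G.dist x a = G.dist x b + 1 := by
  obtain ⟨m, ⟨h1, h2, h3⟩, -⟩ := hG.2 a b x
  have hd : G.dist a b = 1 := dist_eq_one_iff_adj.mpr hab
  have hma : G.dist a m = 0 ∨ G.dist m b = 0 := by omega
  have cxa : G.dist x a = G.dist a x := dist_comm
  have cxb : G.dist x b = G.dist b x := dist_comm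
  rcases hma with h | h
  · have hh : a = m := (hG.1.dist_eq_zero_iff).mp h
    subst hh
    have cab : G.dist b a = G.dist a b := dist_comm
    left; omega
  · have hh : m = b := (hG.1.dist_eq_zero_iff).mp h
    subst hh
    right; omega

private lemma med_between (hG : IsMedianGraph G) {a b u m : V} (hab : G.Adj a b)
    (hu : G.dist u a < G.dist u b) (hm : G.dist u m + G.dist m a = G.dist u a) :
    G.dist m a < G.dist m b := by
  have t : G.dist u b ≤ G.dist u m + G.dist m b := hG.1.dist_triangle
  rcases med_grad hG hab u with h | h <;> rcases med_grad hG hab m with h' | h' <;> omega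

private lemma med_convex_aux (hG : IsMedianGraph G) {a b : V} (hab : G.Adj a b) :
    ∀ n u v z, G.dist z b ≤ n → G.dist u a < G.dist u b → G.dist v a < G.dist v b →
      G.dist u z + G.dist z v = G.dist u v → G.dist z a < G.dist z b := by
  intro n
  induction n with
  | zero =>
    intro u v z hz hu hv huv
    have hzb : b = z := ((hG.1.dist_eq_zero_iff).mp (Nat.le_zero.mp hz)).symm
    subst hzb
    have h1 : G.dist u b = G.dist u a + 1 := by rcases med_grad hG hab u with h | h <;> omega
    have h2 : G.dist v b = G.dist v a + 1 := by rcases med_grad hG hab v with h | h <;> omega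
    have t : G.dist u v ≤ G.dist u a + G.dist a v := hG.1.dist_triangle
    have c1 : G.dist a v = G.dist v a := dist_comm
    have c2 : G.dist b v = G.dist v b := dist_comm
    omega
  | succ n ih =>
    intro u v z hz hu hv huv
    by_cases hzn : G.dist z b ≤ n
    · exact ih u v z hzn hu hv huv
    by_contra hzB0
    have hzB : G.dist z a = G.dist z b + 1 := by
      rcases med_grad hG hab z with h | h <;> omega
    obtain ⟨p, ⟨p1, p2, p3⟩, -⟩ := hG.2 u z b
    have hpB : ¬ G.dist p a < G.dist p b := by
      intro hpA
      have t : G.dist z a ≤ G.dist z p + G.dist p a := hG.1.dist_triangle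
      have c : G.dist z p = G.dist p z := dist_comm
      rcases med_grad hG hab p with h | h <;> omega
    have hpz : z = p := by
      by_contra hne'
      have hne : p ≠ z := fun h => hne' h.symm
      have hzp0 : G.dist p z ≠ 0 := fun h0 => hne ((hG.1.dist_eq_zero_iff).mp h0)
      have t1 : G.dist p v ≤ G.dist p z + G.dist z v := hG.1.dist_triangle
      have t2 : G.dist u v ≤ G.dist u p + G.dist p v := hG.1.dist_triangle
      have c : G.dist z p = G.dist p z := dist_comm
      have hbet : G.dist u p + G.dist p v = G.dist u v := by omega
      have hlt : G.dist p b ≤ n := by omega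
      exact hpB (ih u v p hlt hu hv hbet)
    subst hpz
    obtain ⟨q, ⟨q1, q2, q3⟩, -⟩ := hG.2 v z b
    have hqB : ¬ G.dist q a < G.dist q b := by
      intro hqA
      have t : G.dist z a ≤ G.dist z q + G.dist q a := hG.1.dist_triangle
      have c : G.dist z q = G.dist q z := dist_comm
      rcases med_grad hG hab q with h | h <;> omega
    have hqz : z = q := by
      by_contra hne'
      have hne : q ≠ z := fun h => hne' h.symm
      have hzq0 : G.dist q z ≠ 0 := fun h0 => hne ((hG.1.dist_eq_zero_iff).mp h0)
      have t1 : G.dist q u ≤ G.dist q z + G.dist z u := hG.1.dist_triangle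
      have t2 : G.dist v u ≤ G.dist v q + G.dist q u := hG.1.dist_triangle
      have c1 : G.dist z q = G.dist q z := dist_comm
      have c2 : G.dist z u = G.dist u z := dist_comm
      have c3 : G.dist v u = G.dist u v := dist_comm
      have c4 : G.dist q u = G.dist u q := dist_comm
      have hbet : G.dist u q + G.dist q v = G.dist u v := by
        have c5 : G.dist q v = G.dist v q := dist_comm
        have c6 : G.dist v z = G.dist z v := dist_comm
        omega
      have hlt : G.dist q b ≤ n := by omega
      exact hqB (ih u v q hlt hu hv hbet)
    subst hqz
    obtain ⟨y, ⟨y1, y2, y3⟩, -⟩ := hG.2 u v a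
    have hyA : G.dist y a < G.dist y b := med_between hG hab hu y2
    obtain ⟨m, hm, muniq⟩ := hG.2 u v b
    have hub : G.dist u b = G.dist u a + 1 := by rcases med_grad hG hab u with h | h <;> omega
    have hvb' : G.dist v b = G.dist v a + 1 := by rcases med_grad hG hab v with h | h <;> omega
    have hyb : G.dist y b = G.dist y a + 1 := by rcases med_grad hG hab y with h | h <;> omega
    have hy : y = m := by
      apply muniq
      refine ⟨y1, by omega, by omega⟩
    have hz' : z = m := by
      apply muniq
      exact ⟨huv, p2, q2⟩
    have : y = z := hy.trans hz'.symm
    rw [this] at hyA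
    omega

private lemma med_convex (hG : IsMedianGraph G) {a b u v z : V} (hab : G.Adj a b)
    (hu : G.dist u a < G.dist u b) (hv : G.dist v a < G.dist v b)
    (hz : G.dist u z + G.dist z v = G.dist u v) : G.dist z a < G.dist z b :=
  med_convex_aux hG hab (G.dist z b) u v z le_rfl hu hv hz

private lemma theta_iff (hG : IsMedianGraph G) {a b x y : V} (hab : G.Adj a b)
    (_hxy : G.Adj x y) :
    Theta G (a, b) (x, y) ↔ ¬(G.dist x a < G.dist x b ↔ G.dist y a < G.dist y b) := by
  have c1 : G.dist a x = G.dist x a := dist_comm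
  have c2 : G.dist b y = G.dist y b := dist_comm
  have c3 : G.dist a y = G.dist y a := dist_comm
  have c4 : G.dist b x = G.dist x b := dist_comm
  have gx := med_grad hG hab x
  have gy := med_grad hG hab y
  show G.dist a x + G.dist b y ≠ G.dist a y + G.dist b x ↔ _
  constructor
  · intro H hiff
    rcases gx with h | h <;> rcases gy with h' | h'
    · exact H (by omega)
    · have := hiff.mp (by omega); omega
    · have := hiff.mpr (by omega); omega
    · exact H (by omega)
  · intro H
    rcases gx with h | h <;> rcases gy with h' | h'
    · exact absurd (Iff.intro (fun _ => by omega) (fun _ => by omega)) H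
    · omega
    · omega
    · exact absurd (Iff.intro (fun _ => by omega) (fun _ => by omega)) H

private lemma djokovic (hG : IsMedianGraph G) {a b x y : V} (hab : G.Adj a b)
    (hxy : G.Adj x y) (hx : G.dist x a < G.dist x b) (hy : G.dist y b < G.dist y a)
    (z : V) : G.dist z x < G.dist z y ↔ G.dist z a < G.dist z b := by
  have hdxy : G.dist x y = 1 := dist_eq_one_iff_adj.mpr hxy
  have hdyx : G.dist y x = 1 := dist_eq_one_iff_adj.mpr hxy.symm
  constructor
  · intro h
    by_contra hB
    have hzB : G.dist z b < G.dist z a := by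
      rcases med_grad hG hab z with h' | h' <;> omega
    have hzy : G.dist z y = G.dist z x + 1 := by
      rcases med_grad hG hxy z with h' | h' <;> omega
    have hbet : G.dist z x + G.dist x y = G.dist z y := by omega
    have := med_convex hG hab.symm hzB hy hbet
    omega
  · intro h
    by_contra hB
    have hzx : G.dist z x = G.dist z y + 1 := by
      rcases med_grad hG hxy z with h' | h' <;> omega
    have hbet : G.dist z y + G.dist y x = G.dist z x := by omega
    have := med_convex hG hab h hx hbet
    omega

private lemma hyp_char (hG : IsMedianGraph G) {h : Set (V × V)}
    (hh : IsHyperplane G h) {x y : V} (hm : (x, y) ∈ h) :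
    ∀ p q : V, ((p, q) ∈ h ↔
      G.Adj p q ∧ ¬(G.dist p x < G.dist p y ↔ G.dist q x < G.dist q y)) := by
  obtain ⟨e, he, rfl⟩ := hh
  have hm' : G.Adj x y ∧ Theta G e (x, y) := hm
  obtain ⟨hxy, ht⟩ := hm'
  have cross := (theta_iff hG he hxy).mp ht
  intro p q
  have hmem : (p, q) ∈ {f : V × V | G.Adj f.1 f.2 ∧ Theta G e f} ↔
      G.Adj p q ∧ Theta G e (p, q) := Iff.rfl
  rw [hmem]
  have flipe : ∀ t : V, ¬ G.dist t e.1 < G.dist t e.2 ↔ G.dist t e.2 < G.dist t e.1 := by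
    intro t
    rcases med_grad hG he t with h' | h' <;> constructor <;> intro <;> omega
  by_cases hx : G.dist x e.1 < G.dist x e.2
  · have hy : G.dist y e.2 < G.dist y e.1 := by
      rw [← flipe y]; intro hyy; exact cross ⟨fun _ => hyy, fun _ => hx⟩
    have key := fun t => djokovic hG he hxy hx hy t
    constructor
    · rintro ⟨hpq, ht'⟩
      refine ⟨hpq, ?_⟩
      have c := (theta_iff hG he hpq).mp ht'
      rw [key p, key q]; exact c
    · rintro ⟨hpq, hc⟩
      refine ⟨hpq, (theta_iff hG he hpq).mpr ?_⟩
      rw [key p, key q] at hc; exact hc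
  · have hx' : G.dist x e.2 < G.dist x e.1 := (flipe x).mp hx
    have hy : G.dist y e.1 < G.dist y e.2 := by
      by_contra hyn
      exact cross ⟨fun hxx => absurd hxx hx, fun hyy => absurd hyy hyn⟩
    have key := fun t => djokovic hG he hxy.symm hy hx' t
    have flipp : ∀ t : V, ¬ G.dist t x < G.dist t y ↔ G.dist t y < G.dist t x := by
      intro t
      rcases med_grad hG hxy t with h' | h' <;> constructor <;> intro <;> omega
    have hpq' : ∀ t : V,
        (G.dist t x < G.dist t y) ↔ ¬ (G.dist t e.1 < G.dist t e.2) := by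
      intro t
      constructor
      · intro h1 h2
        have := (key t).mpr h2
        omega
      · intro h1
        by_contra h2
        exact h1 ((key t).mp ((flipp t).mp h2))
    constructor
    · rintro ⟨hpq, ht'⟩
      refine ⟨hpq, ?_⟩
      have c := (theta_iff hG he hpq).mp ht'
      rw [hpq' p, hpq' q]
      exact fun hiff => c (not_iff_not.mp hiff)
    · rintro ⟨hpq, hc⟩
      refine ⟨hpq, (theta_iff hG he hpq).mpr ?_⟩
      rw [hpq' p, hpq' q] at hc
      exact fun hiff => hc (not_iff_not.mpr hiff)

private lemma hyp_eq (hG : IsMedianGraph G) {h h' : Set (V × V)}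
    (hh : IsHyperplane G h) (hh' : IsHyperplane G h') {x y : V}
    (h1 : (x, y) ∈ h) (h2 : (x, y) ∈ h') : h = h' := by
  ext ⟨p, q⟩
  rw [hyp_char hG hh h1 p q, hyp_char hG hh' h2 p q]

private lemma edge_at (hG : IsMedianGraph G) {h : Set (V × V)} {v : V}
    (hh : IsHyperplane G h) (ha : AdjTo G h v) :
    ∃ a, G.Adj v a ∧ (v, a) ∈ h := by
  obtain ⟨e, he, hor⟩ := ha
  obtain ⟨x, y⟩ := e
  obtain ⟨e0, he0, rfl⟩ := hh
  have he' : G.Adj x y ∧ Theta G e0 (x, y) := he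
  obtain ⟨hxy, ht⟩ := he'
  rcases hor with h1 | h1
  · have hxv : x = v := h1
    subst hxv
    exact ⟨y, hxy, ⟨hxy, ht⟩⟩
  · have hyv : y = v := h1
    subst hyv
    refine ⟨x, hxy.symm, ⟨hxy.symm, ?_⟩⟩
    exact Ne.symm ht

private lemma self_mem_class {x y : V} (hxy : G.Adj x y) :
    (x, y) ∈ {f : V × V | G.Adj f.1 f.2 ∧ Theta G (x, y) f} := by
  refine ⟨hxy, ?_⟩
  show G.dist x x + G.dist y y ≠ G.dist x y + G.dist y x
  have h1 : G.dist x y = 1 := dist_eq_one_iff_adj.mpr hxy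
  have h2 : G.dist y x = 1 := dist_eq_one_iff_adj.mpr hxy.symm
  have h3 : G.dist x x = 0 := dist_self
  have h4 : G.dist y y = 0 := dist_self
  omega

private lemma square_complete (hG : IsMedianGraph G) {v a b u : V}
    (hva : G.Adj v a) (hvb : G.Adj v b)
    (huQ : G.dist u a < G.dist u v) (huQ' : G.dist u b < G.dist u v)
    (hbP : G.dist b v < G.dist b a) (haP' : G.dist a v < G.dist a b) :
    ∃ m, G.Adj a m ∧ G.Adj b m ∧ G.dist m a < G.dist m v ∧ G.dist m b < G.dist m v := by
  have hdva : G.dist v a = 1 := dist_eq_one_iff_adj.mpr hva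
  have hdav : G.dist a v = 1 := dist_eq_one_iff_adj.mpr hva.symm
  have hdvb : G.dist v b = 1 := dist_eq_one_iff_adj.mpr hvb
  have hdbv : G.dist b v = 1 := dist_eq_one_iff_adj.mpr hvb.symm
  have hab2 : G.dist a b = 2 := by
    have hne : a ≠ b := by
      intro hh; subst hh
      have : G.dist a a = 0 := dist_self
      omega
    have hnadj : ¬ G.Adj a b := by
      intro hadj
      have h1 : G.dist b a = 1 := dist_eq_one_iff_adj.mpr hadj.symm
      rcases med_grad hG hva b with h' | h' <;> omega
    have t : G.dist a b ≤ G.dist a v + G.dist v b := hG.1.dist_triangle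
    have h0 : G.dist a b ≠ 0 := fun hh => hne ((hG.1.dist_eq_zero_iff).mp hh)
    have h1 : G.dist a b ≠ 1 := fun hh => hnadj (dist_eq_one_iff_adj.mp hh)
    omega
  obtain ⟨m, ⟨m1, m2, m3⟩, -⟩ := hG.2 a b u
  have haaQ : G.dist a a < G.dist a v := by
    have : G.dist a a = 0 := dist_self
    omega
  have hbbQ' : G.dist b b < G.dist b v := by
    have : G.dist b b = 0 := dist_self
    omega
  have hmQ : G.dist m a < G.dist m v := med_convex hG hva.symm haaQ huQ m2
  have hmQ' : G.dist m b < G.dist m v := med_convex hG hvb.symm hbbQ' huQ' m3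
  have hma : m ≠ a := by
    intro hh; subst hh; omega
  have hmb : m ≠ b := by
    intro hh; subst hh; omega
  have ham0 : G.dist a m ≠ 0 := fun h0 => hma (((hG.1.dist_eq_zero_iff).mp h0).symm)
  have hmb0 : G.dist m b ≠ 0 := fun h0 => hmb ((hG.1.dist_eq_zero_iff).mp h0)
  have h1 : G.dist a m = 1 := by omega
  have h2 : G.dist m b = 1 := by omega
  exact ⟨m, dist_eq_one_iff_adj.mp h1, (dist_eq_one_iff_adj.mp h2).symm, hmQ, hmQ'⟩

private lemma boundary_step (hG : IsMedianGraph G) {a b u u' w s z : V}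
    (hab : G.Adj a b) (huu' : G.Adj u u') (hws : G.Adj w s)
    (huA : G.dist u a < G.dist u b) (hu'B : G.dist u' b < G.dist u' a)
    (hwA : G.dist w a < G.dist w b) (hsB : G.dist s b < G.dist s a)
    (hz : G.dist u z + G.dist z w = G.dist u w) :
    ∃ m, G.Adj z m ∧ G.dist m b < G.dist m a := by
  have hzA : G.dist z a < G.dist z b := med_convex hG hab huA hwA hz
  have hzu' : G.dist z u' = G.dist z u + 1 := by
    have h1 := (djokovic hG hab huu' huA hu'B z).mpr hzA
    rcases med_grad hG huu' z with h' | h' <;> omega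
  have hzs : G.dist z s = G.dist z w + 1 := by
    have h1 := (djokovic hG hab hws hwA hsB z).mpr hzA
    rcases med_grad hG hws z with h' | h' <;> omega
  have hu's : G.dist u' s = G.dist u w := by
    have h1 : ¬ G.dist u' w < G.dist u' s :=
      fun hlt => by have := (djokovic hG hab hws hwA hsB u').mp hlt; omega
    have h2 : G.dist u' w = G.dist u' s + 1 := by
      rcases med_grad hG hws u' with h' | h' <;> omega
    have h3 : G.dist w u < G.dist w u' := (djokovic hG hab huu' huA hu'B w).mpr hwA
    have h4 : G.dist w u' = G.dist w u + 1 := by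
      rcases med_grad hG huu' w with h' | h' <;> omega
    have c1 : G.dist u' w = G.dist w u' := dist_comm
    have c2 : G.dist u w = G.dist w u := dist_comm
    omega
  obtain ⟨m, ⟨k1, k2, k3⟩, -⟩ := hG.2 z u' s
  have c1 : G.dist u' m = G.dist m u' := dist_comm
  have c2 : G.dist z u = G.dist u z := dist_comm
  have hdzm : G.dist z m = 1 := by omega
  have hmB : G.dist m b < G.dist m a := med_convex hG hab.symm hu'B hsB k3
  exact ⟨m, dist_eq_one_iff_adj.mp hdzm, hmB⟩

private lemma carrier_convex (hG : IsMedianGraph G) {a b w s z : V}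
    (hab : G.Adj a b) (hws : G.Adj w s)
    (hcross : ¬(G.dist w a < G.dist w b ↔ G.dist s a < G.dist s b))
    (hz : G.dist a z + G.dist z w = G.dist a w) :
    ∃ m, G.Adj z m ∧ ¬(G.dist z a < G.dist z b ↔ G.dist m a < G.dist m b) := by
  have hdab : G.dist a b = 1 := dist_eq_one_iff_adj.mpr hab
  have hdba : G.dist b a = 1 := dist_eq_one_iff_adj.mpr hab.symm
  have hdws : G.dist w s = 1 := dist_eq_one_iff_adj.mpr hws
  have hdsw : G.dist s w = 1 := dist_eq_one_iff_adj.mpr hws.symm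
  have haa0 : G.dist a a = 0 := dist_self
  have hbb0 : G.dist b b = 0 := dist_self
  have haA : G.dist a a < G.dist a b := by omega
  have hbB : G.dist b b < G.dist b a := by omega
  by_cases hzA : G.dist z a < G.dist z b
  · by_cases hwA : G.dist w a < G.dist w b
    · have hsB : G.dist s b < G.dist s a := by
        have h1 : ¬ G.dist s a < G.dist s b := fun hh => hcross ⟨fun _ => hh, fun _ => hwA⟩
        rcases med_grad hG hab s with h' | h' <;> omega
      obtain ⟨m, hm1, hm2⟩ := boundary_step hG hab hab hws haA hbB hwA hsB hz
      exact ⟨m, hm1, fun hiff => by have := hiff.mp hzA; omega⟩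
    · have hwB : G.dist w b < G.dist w a := by
        rcases med_grad hG hab w with h' | h' <;> omega
      have hsA : G.dist s a < G.dist s b := by
        by_contra hh
        exact hcross ⟨fun h1 => absurd h1 hwA, fun h1 => absurd h1 hh⟩
      have hzw : G.dist z w = G.dist z s + 1 := by
        have h1 := (djokovic hG hab hws.symm hsA hwB z).mpr hzA
        rcases med_grad hG hws z with h' | h' <;> omega
      have t1 : G.dist a s ≤ G.dist a z + G.dist z s := hG.1.dist_triangle
      have t2 : G.dist a w ≤ G.dist a s + G.dist s w := hG.1.dist_triangle
      have hz2 : G.dist a z + G.dist z s = G.dist a s := by omega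
      obtain ⟨m, hm1, hm2⟩ := boundary_step hG hab hab hws.symm haA hbB hsA hwB hz2
      exact ⟨m, hm1, fun hiff => by have := hiff.mp hzA; omega⟩
  · have hzB : G.dist z b < G.dist z a := by
      rcases med_grad hG hab z with h' | h' <;> omega
    have hdza : G.dist z a = G.dist z b + 1 := by
      rcases med_grad hG hab z with h' | h' <;> omega
    have cza : G.dist z a = G.dist a z := dist_comm
    have czb : G.dist z b = G.dist b z := dist_comm
    by_cases hwA : G.dist w a < G.dist w b
    · have hsB : G.dist s b < G.dist s a := by
        have h1 : ¬ G.dist s a < G.dist s b := fun hh => hcross ⟨fun _ => hh, fun _ => hwA⟩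
        rcases med_grad hG hab s with h' | h' <;> omega
      have hzw : G.dist z w = G.dist z s + 1 := by
        have h1 : ¬ G.dist z w < G.dist z s :=
          fun hlt => by have := (djokovic hG hab hws hwA hsB z).mp hlt; omega
        rcases med_grad hG hws z with h' | h' <;> omega
      have t1 : G.dist b s ≤ G.dist b z + G.dist z s := hG.1.dist_triangle
      have t2 : G.dist a w ≤ G.dist a b + G.dist b w := hG.1.dist_triangle
      have t3 : G.dist b w ≤ G.dist b s + G.dist s w := hG.1.dist_triangle
      have hz2 : G.dist b z + G.dist z s = G.dist b s := by omega
      obtain ⟨m, hm1, hm2⟩ := boundary_step hG hab.symm hab.symm hws.symm hbB haA hsB hwA hz2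
      refine ⟨m, hm1, fun hiff => ?_⟩
      have := hiff.mpr (by omega)
      omega
    · have hwB : G.dist w b < G.dist w a := by
        rcases med_grad hG hab w with h' | h' <;> omega
      have hsA : G.dist s a < G.dist s b := by
        by_contra hh
        exact hcross ⟨fun h1 => absurd h1 hwA, fun h1 => absurd h1 hh⟩
      have t1 : G.dist b w ≤ G.dist b z + G.dist z w := hG.1.dist_triangle
      have t2 : G.dist a w ≤ G.dist a b + G.dist b w := hG.1.dist_triangle
      have hz2 : G.dist b z + G.dist z w = G.dist b w := by omega
      obtain ⟨m, hm1, hm2⟩ := boundary_step hG hab.symm hab.symm hws hbB haA hwB hsA hz2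
      refine ⟨m, hm1, fun hiff => ?_⟩
      have := hiff.mpr (by omega)
      omega

end Aux

/-- for a vertex `v` with `Wv G v` finite, there is a vertex `w ≠ v` with
`Wv G v ⊆ Wv G w` if and only if the link of `v` is a cone. -/
theorem exists_larger_Wv_iff_cone (G : SimpleGraph V) (hG : IsMedianGraph G)
    (v : V) (hfin : (Wv G v).Finite) :
    (∃ w : V, w ≠ v ∧ Wv G v ⊆ Wv G w) ↔ LinkIsCone G v := by

  constructor
  · rintro ⟨w, hwv, hsub⟩
    have hvw0 : G.dist v w ≠ 0 :=
      fun h0 => hwv ((hG.1.dist_eq_zero_iff.mp h0)).symm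
    obtain ⟨p, hp⟩ := hG.1.exists_walk_length_eq_dist v w
    obtain ⟨n, hvn, hnw⟩ : ∃ n, G.Adj v n ∧ G.dist v n + G.dist n w = G.dist v w := by
      cases p with
      | nil =>
        rw [← hp] at hvw0
        simp at hvw0
      | cons hadj q =>
        rename_i n'
        refine ⟨n', hadj, ?_⟩
        have h1 : G.dist n' w ≤ q.length := dist_le q
        have h2 : G.dist v w ≤ G.dist v n' + G.dist n' w := hG.1.dist_triangle
        have h3 : G.dist v n' = 1 := dist_eq_one_iff_adj.mpr hadj
        have h4 : q.length + 1 = G.dist v w := by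
          rw [← hp]; simp [SimpleGraph.Walk.length_cons]
        omega
    have hhyp : IsHyperplane G {f : V × V | G.Adj f.1 f.2 ∧ Theta G (v, n) f} :=
      ⟨(v, n), hvn, rfl⟩
    refine ⟨_, ⟨hhyp, (v, n), self_mem_class hvn, Or.inl rfl⟩, fun h' hh' hne => ?_⟩
    have hh'w := hsub hh'
    obtain ⟨hh'1, hh'2⟩ := hh'
    obtain ⟨hw1, hw2⟩ := hh'w
    obtain ⟨b, hvb, hmb⟩ := edge_at hG hh'1 hh'2
    have char' := hyp_char hG hh'1 hmb
    have charh := hyp_char hG hhyp (self_mem_class hvn)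
    have hdis : ∀ p q : V,
        (p, q) ∈ {f : V × V | G.Adj f.1 f.2 ∧ Theta G (v, n) f} → (p, q) ∈ h' → False :=
      fun p q h1 h2 => hne (hyp_eq hG hh'1 hhyp h2 h1)
    have hdvv : G.dist v v = 0 := dist_self
    have hdvn1 : G.dist v n = 1 := dist_eq_one_iff_adj.mpr hvn
    have hdvb1 : G.dist v b = 1 := dist_eq_one_iff_adj.mpr hvb
    have hdnv1 : G.dist n v = 1 := dist_eq_one_iff_adj.mpr hvn.symm
    have hdnn : G.dist n n = 0 := dist_self
    have hvPn : G.dist v v < G.dist v n := by omega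
    have hvPb : G.dist v v < G.dist v b := by omega
    have hbP : G.dist b v < G.dist b n := by
      by_contra hh
      have hbQ : G.dist b n < G.dist b v := by
        rcases med_grad hG hvn b with h' | h' <;> omega
      exact hdis v b
        ((charh v b).mpr ⟨hvb, fun hiff => by have := hiff.mp hvPn; omega⟩) hmb
    have hnP' : G.dist n v < G.dist n b := by
      by_contra hh
      have hnQ' : G.dist n b < G.dist n v := by
        rcases med_grad hG hvb n with h' | h' <;> omega
      exact hdis v n (self_mem_class hvn)
        ((char' v n).mpr ⟨hvn, fun hiff => by have := hiff.mp hvPb; omega⟩)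
    obtain ⟨s, hws, hms⟩ := edge_at hG hw1 hw2
    have hcross : ¬(G.dist w v < G.dist w b ↔ G.dist s v < G.dist s b) :=
      ((char' w s).mp hms).2
    obtain ⟨c, hnc, hcc⟩ := carrier_convex hG hvb hws hcross hnw
    have hcQ' : G.dist c b < G.dist c v := by
      have h1 : ¬ G.dist c v < G.dist c b := fun hh => hcc ⟨fun _ => hh, fun _ => hnP'⟩
      rcases med_grad hG hvb c with h' | h' <;> omega
    have hcQ : G.dist c n < G.dist c v := by
      by_contra hh
      have hcP : G.dist c v < G.dist c n := by
        rcases med_grad hG hvn c with h' | h' <;> omega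
      have m1 : (n, c) ∈ {f : V × V | G.Adj f.1 f.2 ∧ Theta G (v, n) f} :=
        (charh n c).mpr ⟨hnc, fun hiff => by have := hiff.mpr hcP; omega⟩
      have m2 : (n, c) ∈ h' :=
        (char' n c).mpr ⟨hnc, fun hiff => by have := hiff.mp hnP'; omega⟩
      exact hdis n c m1 m2
    obtain ⟨m, hnm, hbm, hmQ, hmQ'⟩ := square_complete hG hvn hvb hcQ hcQ' hbP hnP'
    refine ⟨v, n, b, m, self_mem_class hvn, ?_, hmb, ?_, hvn, hbm, hvb, hnm⟩
    · exact (charh b m).mpr ⟨hbm, fun hiff => by have := hiff.mp hbP; omega⟩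
    · exact (char' n m).mpr ⟨hnm, fun hiff => by have := hiff.mp hnP'; omega⟩
  · rintro ⟨h, hhv, htr⟩
    have hhvc := hhv
    obtain ⟨hhv1, hhv2⟩ := hhvc
    obtain ⟨a, hva, hma⟩ := edge_at hG hhv1 hhv2
    refine ⟨a, hva.ne', fun h' hh' => ?_⟩
    have hh'c := hh'
    obtain ⟨hh'1, hh'2⟩ := hh'c
    by_cases heq : h' = h
    · rw [heq]
      exact ⟨hhv1, (v, a), hma, Or.inr rfl⟩
    · have htrans := htr h' hh' heq
      obtain ⟨b, hvb, hmb⟩ := edge_at hG hh'1 hh'2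
      have char := hyp_char hG hhv1 hma
      have char' := hyp_char hG hh'1 hmb
      have hdis : ∀ p q : V, (p, q) ∈ h → (p, q) ∈ h' → False :=
        fun p q h1 h2 => heq (hyp_eq hG hh'1 hhv1 h2 h1)
      have hdvv : G.dist v v = 0 := dist_self
      have hdva1 : G.dist v a = 1 := dist_eq_one_iff_adj.mpr hva
      have hdvb1 : G.dist v b = 1 := dist_eq_one_iff_adj.mpr hvb
      have hvPa : G.dist v v < G.dist v a := by omega
      have hvPb : G.dist v v < G.dist v b := by omega
      have haP' : G.dist a v < G.dist a b := by
        by_contra hh0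
        have : G.dist a b < G.dist a v := by
          rcases med_grad hG hvb a with h' | h' <;> omega
        exact hdis v a hma
          ((char' v a).mpr ⟨hva, fun hiff => by have := hiff.mp hvPb; omega⟩)
      have hbP : G.dist b v < G.dist b a := by
        by_contra hh0
        have : G.dist b a < G.dist b v := by
          rcases med_grad hG hva b with h' | h' <;> omega
        exact hdis v b
          ((char v b).mpr ⟨hvb, fun hiff => by have := hiff.mp hvPa; omega⟩) hmb
      obtain ⟨x, y, c, dd, T1, T2, T3, T4, axy, acd, axc, abd⟩ := htrans
      have K1 : ¬(G.dist x v < G.dist x a ↔ G.dist y v < G.dist y a) := ((char x y).mp T1).2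
      have K2 : ¬(G.dist c v < G.dist c a ↔ G.dist dd v < G.dist dd a) := ((char c dd).mp T2).2
      have K3 : ¬(G.dist x v < G.dist x b ↔ G.dist c v < G.dist c b) := ((char' x c).mp T3).2
      have K4 : ¬(G.dist y v < G.dist y b ↔ G.dist dd v < G.dist dd b) := ((char' y dd).mp T4).2
      have K5 : (G.dist x v < G.dist x b ↔ G.dist y v < G.dist y b) := by
        by_contra hc
        exact hdis x y T1 ((char' x y).mpr ⟨axy, hc⟩)
      have K7 : (G.dist x v < G.dist x a ↔ G.dist c v < G.dist c a) := by
        by_contra hc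
        exact hdis x c ((char x c).mpr ⟨axc, hc⟩) T3
      have K8 : (G.dist y v < G.dist y a ↔ G.dist dd v < G.dist dd a) := by
        by_contra hc
        exact hdis y dd ((char y dd).mpr ⟨abd, hc⟩) T4
      have flipa : ∀ t, ¬ G.dist t v < G.dist t a → G.dist t a < G.dist t v := by
        intro t ht
        rcases med_grad hG hva t with h' | h' <;> omega
      have flipb : ∀ t, ¬ G.dist t v < G.dist t b → G.dist t b < G.dist t v := by
        intro t ht
        rcases med_grad hG hvb t with h' | h' <;> omega
      obtain ⟨u, huQ, huQ'⟩ : ∃ u, G.dist u a < G.dist u v ∧ G.dist u b < G.dist u v := by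
        by_cases h1 : G.dist x v < G.dist x a
        · by_cases h2 : G.dist x v < G.dist x b
          · have hy : ¬ G.dist y v < G.dist y a := fun hy' => K1 ⟨fun _ => hy', fun _ => h1⟩
            have hdd1 : ¬ G.dist dd v < G.dist dd a := fun hd => hy (K8.mpr hd)
            have hyb : G.dist y v < G.dist y b := K5.mp h2
            have hdd2 : ¬ G.dist dd v < G.dist dd b := fun hd => K4 ⟨fun _ => hd, fun _ => hyb⟩
            exact ⟨dd, flipa dd hdd1, flipb dd hdd2⟩
          · have hy : ¬ G.dist y v < G.dist y a := fun hy' => K1 ⟨fun _ => hy', fun _ => h1⟩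
            have hyb : ¬ G.dist y v < G.dist y b := fun hy' => h2 (K5.mpr hy')
            exact ⟨y, flipa y hy, flipb y hyb⟩
        · by_cases h2 : G.dist x v < G.dist x b
          · have hc1 : ¬ G.dist c v < G.dist c a := fun hc' => h1 (K7.mpr hc')
            have hc2 : ¬ G.dist c v < G.dist c b := fun hc' => K3 ⟨fun _ => hc', fun _ => h2⟩
            exact ⟨c, flipa c hc1, flipb c hc2⟩
          · exact ⟨x, flipa x h1, flipb x h2⟩
      obtain ⟨m, ham, hbm, hmQ, hmQ'⟩ := square_complete hG hva hvb huQ huQ' hbP haP'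
      have hmem : (a, m) ∈ h' :=
        (char' a m).mpr ⟨ham, fun hiff => by have := hiff.mp haP'; omega⟩
      exact ⟨hh'1, (a, m), hmem, Or.inl rfl⟩
end

section
/- Let v be a vertex of a CAT(0) cube complex X with W_v finite, and suppose the link of v is not a cone. Then W_v is a maximal clique in the contact graph of X, and there is no vertex w ≠ v with W_w = W_v. -/
open SimpleGraph

variable {V : Type*}

namespace MG

variable {G : SimpleGraph V}

lemma dist0 (hG : IsMedianGraph G) {x y : V} (h : G.dist x y = 0) : x = y :=
  (hG.1.dist_eq_zero_iff).mp h

lemma adj1 {x y : V} (h : G.Adj x y) : G.dist x y = 1 :=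
  dist_eq_one_iff_adj.mpr h

/-- step along a geodesic -/
lemma step (hG : IsMedianGraph G) {u w : V} {k : ℕ} (h : G.dist u w = k + 1) :
    ∃ u₁ : V, G.Adj u u₁ ∧ G.dist u₁ w = k := by
  obtain ⟨p, hp⟩ := (hG.1).exists_walk_length_eq_dist u w
  cases p with
  | nil => rw [SimpleGraph.Walk.length_nil] at hp; omega
  | @cons _ u₁ _ ha q =>
    refine ⟨u₁, ha, ?_⟩
    have h1 : G.dist u₁ w ≤ q.length := SimpleGraph.dist_le q
    have h2 : G.dist u w ≤ G.dist u u₁ + G.dist u₁ w := hG.1.dist_triangle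
    have h3 : G.dist u u₁ = 1 := adj1 ha
    rw [SimpleGraph.Walk.length_cons] at hp
    omega

/-- every vertex is strictly closer to one endpoint of an edge -/
lemma dichot (hG : IsMedianGraph G) {a b : V} (hab : G.Adj a b) (z : V) :
    G.dist z b = G.dist z a + 1 ∨ G.dist z a = G.dist z b + 1 := by
  obtain ⟨m, ⟨h1, h2, h3⟩, -⟩ := hG.2 a b z
  have hd : G.dist a b = 1 := adj1 hab
  have hm : G.dist a m = 0 ∨ G.dist m b = 0 := by omega
  rcases hm with hm | hm
  · have : a = m := dist0 hG hm
    rw [← this] at h3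
    left
    have c1 : G.dist b a = 1 := by rw [SimpleGraph.dist_comm]; exact hd
    have c2 : G.dist b z = G.dist z b := SimpleGraph.dist_comm
    have c3 : G.dist a z = G.dist z a := SimpleGraph.dist_comm
    omega
  · have : m = b := dist0 hG hm
    rw [this] at h2
    right
    have c2 : G.dist b z = G.dist z b := SimpleGraph.dist_comm
    have c3 : G.dist a z = G.dist z a := SimpleGraph.dist_comm
    omega

lemma no_triangle (hG : IsMedianGraph G) {x y z : V}
    (h1 : G.Adj x y) (h2 : G.Adj y z) (h3 : G.Adj x z) : False := by
  have := dichot hG h2 x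
  have e1 : G.dist x y = 1 := adj1 h1
  have e2 : G.dist x z = 1 := adj1 h3
  omega

lemma quad (hG : IsMedianGraph G) {w z1 z2 u : V} {k : ℕ}
    (h1 : G.Adj w z1) (h2 : G.Adj w z2) (hne : z1 ≠ z2)
    (d1 : G.dist u z1 = k) (d2 : G.dist u z2 = k) (dw : G.dist u w = k + 1) :
    ∃ t : V, G.Adj z1 t ∧ G.Adj z2 t ∧ G.dist u t + 1 = k := by
  have hk : 1 ≤ k := by
    by_contra hk0
    have hz1 : u = z1 := dist0 hG (by omega)
    have hz2 : u = z2 := dist0 hG (by omega)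
    exact hne (hz1.symm.trans hz2)
  have hz12 : G.dist z1 z2 = 2 := by
    have hle : G.dist z1 z2 ≤ G.dist z1 w + G.dist w z2 := hG.1.dist_triangle
    have e1 : G.dist z1 w = 1 := by rw [SimpleGraph.dist_comm]; exact adj1 h1
    have e2 : G.dist w z2 = 1 := adj1 h2
    have hne0 : G.dist z1 z2 ≠ 0 := fun h => hne (dist0 hG h)
    have hne1 : G.dist z1 z2 ≠ 1 := by
      intro h
      exact no_triangle hG h1 (dist_eq_one_iff_adj.mp h) h2
    omega
  obtain ⟨m, ⟨m1, m2, m3⟩, -⟩ := hG.2 z1 z2 u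
  have c1 : G.dist u z1 = G.dist z1 u := SimpleGraph.dist_comm
  have c2 : G.dist u z2 = G.dist z2 u := SimpleGraph.dist_comm
  have c4 : G.dist m z2 = G.dist z2 m := SimpleGraph.dist_comm
  have e1 : G.dist z1 m = 1 := by omega
  have e2 : G.dist z2 m = 1 := by omega
  refine ⟨m, dist_eq_one_iff_adj.mp e1, dist_eq_one_iff_adj.mp e2, ?_⟩
  have c3 : G.dist u m = G.dist m u := SimpleGraph.dist_comm
  omega

/-- the key Djoković property: a crossing edge points away from every vertex
on the near side -/
lemma claimP (hG : IsMedianGraph G) :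
    ∀ n : ℕ, ∀ {a b x z y : V}, G.dist z y = n → G.Adj a b →
      G.dist x b = G.dist x a + 1 → G.dist z a = G.dist z b + 1 → G.Adj x z →
      G.dist y b = G.dist y a + 1 → G.dist z y = G.dist x y + 1 := by
  intro n
  induction n using Nat.strong_induction_on with
  | _ n IH =>
  intro a b x z y hn hab hx hz hxz hy
  have c1 : G.dist y z = G.dist z y := SimpleGraph.dist_comm
  have c2 : G.dist y x = G.dist x y := SimpleGraph.dist_comm
  rcases dichot hG hxz y with hgood | hbad
  · omega
  · exfalso
    rcases Nat.eq_zero_or_pos n with h0 | hpos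
    · have hzy : z = y := dist0 hG (by omega)
      rw [← hzy] at hy
      omega
    have dxz : G.dist x z = 1 := adj1 hxz
    have da := dichot hG hxz a
    have db := dichot hG hxz b
    have ca1 : G.dist a z = G.dist z a := SimpleGraph.dist_comm
    have ca2 : G.dist a x = G.dist x a := SimpleGraph.dist_comm
    have cb1 : G.dist b z = G.dist z b := SimpleGraph.dist_comm
    have cb2 : G.dist b x = G.dist x b := SimpleGraph.dist_comm
    have hxa : G.dist x a = G.dist z b := by omega
    have hxb : G.dist x b = G.dist z b + 1 := by omega
    obtain ⟨m, ⟨m1, m2, m3⟩, -⟩ := hG.2 z y b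
    by_cases hmz : m = z
    · rw [hmz] at m1 m2 m3
      obtain ⟨M, ⟨M1, M2, M3⟩, -⟩ := hG.2 x y a
      have cM : G.dist y M = G.dist M y := SimpleGraph.dist_comm
      have hM1 : G.dist x M = 1 := by omega
      have hMy : G.dist M y = n := by omega
      have hMa : G.dist M a + 1 = G.dist z b := by omega
      have hMadj : G.Adj x M := dist_eq_one_iff_adj.mp hM1
      have d1 := dichot hG hab M
      have d2 := dichot hG hMadj b
      have cbM : G.dist b M = G.dist M b := SimpleGraph.dist_comm
      have hMb : G.dist M b = G.dist z b := by omega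
      have hzmed : G.dist x z + G.dist z y = G.dist x y ∧
          G.dist x z + G.dist z b = G.dist x b ∧
          G.dist y z + G.dist z b = G.dist y b := by
        refine ⟨by omega, by omega, m3⟩
      have hMmed : G.dist x M + G.dist M y = G.dist x y ∧
          G.dist x M + G.dist M b = G.dist x b ∧
          G.dist y M + G.dist M b = G.dist y b := by
        refine ⟨M1, by omega, by omega⟩
      have hzM : z = M := (hG.2 x y b).unique hzmed hMmed
      rw [hzM] at hz
      omega
    · have hzm0 : G.dist z m ≠ 0 := fun h => hmz ((dist0 hG h).symm)
      obtain ⟨z₁, hzz1, hz1m⟩ := step hG (show G.dist z m = (G.dist z m - 1) + 1 by omega)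
      have e0 : G.dist z z₁ = 1 := adj1 hzz1
      have t1 : G.dist z₁ y ≤ G.dist z₁ m + G.dist m y := hG.1.dist_triangle
      have t2 : G.dist z y ≤ G.dist z z₁ + G.dist z₁ y := hG.1.dist_triangle
      have t3 : G.dist z₁ b ≤ G.dist z₁ m + G.dist m b := hG.1.dist_triangle
      have t4 : G.dist z b ≤ G.dist z z₁ + G.dist z₁ b := hG.1.dist_triangle
      have ez1y : G.dist z₁ y + 1 = n := by omega
      have ez1b : G.dist z₁ b + 1 = G.dist z b := by omega
      have da1 := dichot hG hzz1 a
      have db1 := dichot hG hab z₁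
      have ca3 : G.dist a z₁ = G.dist z₁ a := SimpleGraph.dist_comm
      have hz1a : G.dist z₁ a = G.dist z b := by omega
      have hz1side : G.dist z₁ a = G.dist z₁ b + 1 := by omega
      have hxz1 : x ≠ z₁ := by intro h; subst h; omega
      obtain ⟨t, htx, htz1, hta⟩ :=
        quad (u := a) (k := G.dist z b) hG hxz.symm hzz1 hxz1 (by omega) (by omega) (by omega)
      have dtb := dichot hG hab t
      have dtb2 := dichot hG htx b
      have cat : G.dist a t = G.dist t a := SimpleGraph.dist_comm
      have cbt : G.dist b t = G.dist t b := SimpleGraph.dist_comm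
      have htbe : G.dist t b = G.dist t a + 1 := by omega
      have dty1 := dichot hG htx y
      have dty2 := dichot hG htz1 y
      have cyt : G.dist y t = G.dist t y := SimpleGraph.dist_comm
      have cyz1 : G.dist y z₁ = G.dist z₁ y := SimpleGraph.dist_comm
      have hIH := IH (G.dist z₁ y) (by omega) rfl hab htbe hz1side htz1.symm hy
      omega

/-- halfspaces are convex -/
lemma conv (hG : IsMedianGraph G) {a b : V} (hab : G.Adj a b) :
    ∀ n : ℕ, ∀ {x y z : V}, G.dist x z = n →
      G.dist x b = G.dist x a + 1 → G.dist y b = G.dist y a + 1 →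
      G.dist x z + G.dist z y = G.dist x y → G.dist z b = G.dist z a + 1 := by
  intro n
  induction n using Nat.strong_induction_on with
  | _ n IH =>
  intro x y z hn hx hy hbtw
  rcases Nat.eq_zero_or_pos n with h0 | hpos
  · have hxz : x = z := dist0 hG (by omega)
    rw [← hxz]; exact hx
  · obtain ⟨x₁, hxx1, hx1z⟩ := step hG (show G.dist x z = (n-1) + 1 by omega)
    have e0 : G.dist x x₁ = 1 := adj1 hxx1
    have t1 : G.dist x₁ y ≤ G.dist x₁ z + G.dist z y := hG.1.dist_triangle
    have t2 : G.dist x y ≤ G.dist x x₁ + G.dist x₁ y := hG.1.dist_triangle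
    have hx1y : G.dist x₁ z + G.dist z y = G.dist x₁ y := by omega
    rcases dichot hG hab x₁ with hx1A | hx1B
    · exact IH (n-1) (by omega) hx1z hx1A hy hx1y
    · exfalso
      have := claimP hG (G.dist x₁ y) rfl hab hx hx1B hxx1 hy
      omega

/-- gate property of a crossing edge: near side -/
lemma gp (hG : IsMedianGraph G) {a b u u' : V} (hab : G.Adj a b)
    (hu : G.dist u b = G.dist u a + 1) (hu' : G.dist u' a = G.dist u' b + 1)
    (huu' : G.Adj u u') {x : V} (hx : G.dist x b = G.dist x a + 1) :
    G.dist x u' = G.dist x u + 1 := by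
  rcases dichot hG huu' x with h | h
  · exact h
  · exfalso
    have e0 : G.dist u' u = 1 := by rw [SimpleGraph.dist_comm]; exact adj1 huu'
    have hbtw : G.dist x u' + G.dist u' u = G.dist x u := by omega
    have := conv hG hab (G.dist x u') rfl hx hu hbtw
    omega

/-- gate property of a crossing edge: far side -/
lemma gp2 (hG : IsMedianGraph G) {a b u u' : V} (hab : G.Adj a b)
    (hu : G.dist u b = G.dist u a + 1) (hu' : G.dist u' a = G.dist u' b + 1)
    (huu' : G.Adj u u') {x : V} (hx : G.dist x a = G.dist x b + 1) :
    G.dist x u = G.dist x u' + 1 :=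
  gp hG hab.symm hu' hu huu'.symm hx

/-- the set of oriented edges crossing the wall determined by edge `(a,b)` -/
def cross (G : SimpleGraph V) (a b : V) : Set (V × V) :=
  {f | G.Adj f.1 f.2 ∧
    ((G.dist f.1 b = G.dist f.1 a + 1 ∧ G.dist f.2 a = G.dist f.2 b + 1) ∨
     (G.dist f.1 a = G.dist f.1 b + 1 ∧ G.dist f.2 b = G.dist f.2 a + 1))}

lemma cross_swap {a b : V} : cross G a b = cross G b a := by
  ext ⟨c, e⟩
  simp only [cross, Set.mem_setOf_eq]
  tauto

lemma theta_iff (hG : IsMedianGraph G) {a b : V} (hab : G.Adj a b) (c e : V) :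
    Theta G (a, b) (c, e) ↔
      ((G.dist c b = G.dist c a + 1 ∧ G.dist e a = G.dist e b + 1) ∨
       (G.dist c a = G.dist c b + 1 ∧ G.dist e b = G.dist e a + 1)) := by
  have h1 := dichot hG hab c
  have h2 := dichot hG hab e
  have c1 : G.dist a c = G.dist c a := SimpleGraph.dist_comm
  have c2 : G.dist b c = G.dist c b := SimpleGraph.dist_comm
  have c3 : G.dist a e = G.dist e a := SimpleGraph.dist_comm
  have c4 : G.dist b e = G.dist e b := SimpleGraph.dist_comm
  show G.dist a c + G.dist b e ≠ G.dist a e + G.dist b c ↔ _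
  omega

lemma hyp_eq_cross (hG : IsMedianGraph G) {a b : V} (hab : G.Adj a b) :
    {f : V × V | G.Adj f.1 f.2 ∧ Theta G (a, b) f} = cross G a b := by
  ext ⟨c, e⟩
  simp only [Set.mem_setOf_eq, cross]
  exact and_congr_right fun _ => theta_iff hG hab c e

lemma hyp_to_cross (hG : IsMedianGraph G) {h : Set (V × V)} (hh : IsHyperplane G h) :
    ∃ a b : V, G.Adj a b ∧ h = cross G a b := by
  obtain ⟨e, he, rfl⟩ := hh
  exact ⟨e.1, e.2, he, hyp_eq_cross hG he⟩

lemma cross_is_hyp (hG : IsMedianGraph G) {a b : V} (hab : G.Adj a b) :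
    IsHyperplane G (cross G a b) :=
  ⟨(a, b), hab, (hyp_eq_cross hG hab).symm⟩

lemma transfer (hG : IsMedianGraph G) {a b c e : V} (hab : G.Adj a b)
    (hc : G.dist c b = G.dist c a + 1) (he : G.dist e a = G.dist e b + 1)
    (hce : G.Adj c e) (x : V) :
    (G.dist x e = G.dist x c + 1 ↔ G.dist x b = G.dist x a + 1) ∧
    (G.dist x c = G.dist x e + 1 ↔ G.dist x a = G.dist x b + 1) := by
  have d1 := dichot hG hab x
  refine ⟨⟨fun h => ?_, fun h => gp hG hab hc he hce h⟩,
          ⟨fun h => ?_, fun h => gp2 hG hab hc he hce h⟩⟩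
  · rcases d1 with h' | h'
    · exact h'
    · exfalso; have := gp2 hG hab hc he hce h'; omega
  · rcases d1 with h' | h'
    · exfalso; have := gp hG hab hc he hce h'; omega
    · exact h'

lemma cross_transfer (hG : IsMedianGraph G) {a b c e : V} (hab : G.Adj a b)
    (hc : G.dist c b = G.dist c a + 1) (he : G.dist e a = G.dist e b + 1)
    (hce : G.Adj c e) : cross G c e = cross G a b := by
  ext ⟨x, y⟩
  have h1 := transfer hG hab hc he hce x
  have h2 := transfer hG hab hc he hce y
  simp only [cross, Set.mem_setOf_eq]
  constructor
  · rintro ⟨hadj, hs⟩; exact ⟨hadj, by tauto⟩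
  · rintro ⟨hadj, hs⟩; exact ⟨hadj, by tauto⟩

lemma edge_mem_cross {a b : V} (hab : G.Adj a b) : (a, b) ∈ cross G a b := by
  refine ⟨hab, Or.inl ⟨?_, ?_⟩⟩
  · rw [SimpleGraph.dist_self, adj1 hab]
  · rw [SimpleGraph.dist_self, SimpleGraph.dist_comm, adj1 hab]

lemma adjTo_cross_iff {a b v : V} :
    AdjTo G (cross G a b) v ↔ ∃ z, G.Adj v z ∧
      ((G.dist v b = G.dist v a + 1 ∧ G.dist z a = G.dist z b + 1) ∨
       (G.dist v a = G.dist v b + 1 ∧ G.dist z b = G.dist z a + 1)) := by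
  constructor
  · rintro ⟨⟨x, y⟩, ⟨hadj, hs⟩, hv | hv⟩
    · simp only at hv; subst hv; exact ⟨y, hadj, hs⟩
    · simp only at hv; subst hv; exact ⟨x, hadj.symm, by tauto⟩
  · rintro ⟨z, hadj, hs⟩
    exact ⟨(v, z), ⟨hadj, hs⟩, Or.inl rfl⟩

lemma adjTo_cross_base (hG : IsMedianGraph G) {a b : V} (hab : G.Adj a b) :
    AdjTo G (cross G a b) a :=
  ⟨(a, b), edge_mem_cross hab, Or.inl rfl⟩

/-- carrier: two same-side carrier vertices; anything between is in the carrier -/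
lemma carSame (hG : IsMedianGraph G) {a b y1 y2 y1' y2' z : V} (hab : G.Adj a b)
    (h1 : G.dist y1 b = G.dist y1 a + 1) (h2 : G.dist y2 b = G.dist y2 a + 1)
    (h1' : G.dist y1' a = G.dist y1' b + 1) (h2' : G.dist y2' a = G.dist y2' b + 1)
    (e1 : G.Adj y1 y1') (e2 : G.Adj y2 y2')
    (hz : G.dist y1 z + G.dist z y2 = G.dist y1 y2) :
    ∃ t, G.Adj z t ∧ G.dist t a = G.dist t b + 1 ∧ G.dist z b = G.dist z a + 1 := by
  have czy1 : G.dist y1 z = G.dist z y1 := SimpleGraph.dist_comm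
  have hzab : G.dist z b = G.dist z a + 1 := conv hG hab (G.dist y1 z) rfl h1 h2 hz
  have g1 : G.dist z y1' = G.dist z y1 + 1 := gp hG hab h1 h1' e1 hzab
  have g2 : G.dist z y2' = G.dist z y2 + 1 := gp hG hab h2 h2' e2 hzab
  have g3 : G.dist y2 y1' = G.dist y2 y1 + 1 := gp hG hab h1 h1' e1 h2
  have g4 : G.dist y1' y2 = G.dist y1' y2' + 1 := gp2 hG hab h2 h2' e2 h1'
  obtain ⟨t, ⟨t1, t2, t3⟩, -⟩ := hG.2 z y1' y2'
  have cc1 : G.dist y2 y1' = G.dist y1' y2 := SimpleGraph.dist_comm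
  have cc2 : G.dist y2 y1 = G.dist y1 y2 := SimpleGraph.dist_comm
  have cc3 : G.dist y1' t = G.dist t y1' := SimpleGraph.dist_comm
  have ht1 : G.dist z t = 1 := by omega
  have htadj : G.Adj z t := dist_eq_one_iff_adj.mp ht1
  rcases dichot hG hab t with htA | htB
  · exfalso
    have g5 : G.dist t y1' = G.dist t y1 + 1 := gp hG hab h1 h1' e1 htA
    have g6 : G.dist t y2' = G.dist t y2 + 1 := gp hG hab h2 h2' e2 htA
    have tri : G.dist y1 y2 ≤ G.dist y1 t + G.dist t y2 := hG.1.dist_triangle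
    have cc4 : G.dist y1 t = G.dist t y1 := SimpleGraph.dist_comm
    omega
  · exact ⟨t, htadj, htB, hzab⟩

lemma carCore (hG : IsMedianGraph G) {a b P P' Q Q' z : V} (hab : G.Adj a b)
    (hP : G.dist P b = G.dist P a + 1) (hQ : G.dist Q b = G.dist Q a + 1)
    (hP' : G.dist P' a = G.dist P' b + 1) (hQ' : G.dist Q' a = G.dist Q' b + 1)
    (eP : G.Adj P P') (eQ : G.Adj Q Q')
    (hbtw : G.dist P z + G.dist z Q = G.dist P Q) :
    AdjTo G (cross G a b) z := by
  obtain ⟨t, hzt, htB, hzab⟩ := carSame hG hab hP hQ hP' hQ' eP eQ hbtw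
  exact adjTo_cross_iff.mpr ⟨t, hzt, Or.inl ⟨hzab, htB⟩⟩

lemma carConvA (hG : IsMedianGraph G) {a b p q z : V} (hab : G.Adj a b)
    (hp : AdjTo G (cross G a b) p) (hq : AdjTo G (cross G a b) q)
    (hbtw : G.dist p z + G.dist z q = G.dist p q)
    (hzA : G.dist z b = G.dist z a + 1) :
    AdjTo G (cross G a b) z := by
  obtain ⟨p', hpp', hps⟩ := adjTo_cross_iff.mp hp
  obtain ⟨q', hqq', hqs⟩ := adjTo_cross_iff.mp hq
  have cpz : G.dist p z = G.dist z p := SimpleGraph.dist_comm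
  have cqz : G.dist z q = G.dist q z := SimpleGraph.dist_comm
  rcases hps with ⟨hpA, hp'B⟩ | ⟨hpB, hp'A⟩
  · rcases hqs with ⟨hqA, hq'B⟩ | ⟨hqB, hq'A⟩
    · exact carCore hG hab hpA hqA hp'B hq'B hpp' hqq' hbtw
    · -- q on far side, use q' as base point
      have gzq : G.dist z q = G.dist z q' + 1 := gp hG hab hq'A hqB hqq'.symm hzA
      have gpq : G.dist p q = G.dist p q' + 1 := gp hG hab hq'A hqB hqq'.symm hpA
      have hbtw' : G.dist p z + G.dist z q' = G.dist p q' := by omega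
      exact carCore hG hab hpA hq'A hp'B hqB hpp' hqq'.symm hbtw'
  · rcases hqs with ⟨hqA, hq'B⟩ | ⟨hqB, hq'A⟩
    · have gzp : G.dist z p = G.dist z p' + 1 := gp hG hab hp'A hpB hpp'.symm hzA
      have gqp : G.dist q p = G.dist q p' + 1 := gp hG hab hp'A hpB hpp'.symm hqA
      have cqp : G.dist q p = G.dist p q := SimpleGraph.dist_comm
      have cqp' : G.dist q p' = G.dist p' q := SimpleGraph.dist_comm
      have cpz' : G.dist p' z = G.dist z p' := SimpleGraph.dist_comm
      have hbtw' : G.dist p' z + G.dist z q = G.dist p' q := by omega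
      exact carCore hG hab hp'A hqA hpB hq'B hpp'.symm hqq' hbtw'
    · exfalso
      have := conv hG hab.symm (G.dist p z) rfl hpB hqB hbtw
      omega

/-- carriers are convex -/
lemma carConv (hG : IsMedianGraph G) {a b p q z : V} (hab : G.Adj a b)
    (hp : AdjTo G (cross G a b) p) (hq : AdjTo G (cross G a b) q)
    (hbtw : G.dist p z + G.dist z q = G.dist p q) :
    AdjTo G (cross G a b) z := by
  rcases dichot hG hab z with hzA | hzB
  · exact carConvA hG hab hp hq hbtw hzA
  · rw [cross_swap] at hp hq ⊢
    exact carConvA hG hab.symm hp hq hbtw hzB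

/-- gates onto carriers -/
lemma exists_gate (hG : IsMedianGraph G) {a b : V} (hab : G.Adj a b) (v : V) :
    ∃ g, AdjTo G (cross G a b) g ∧ ∀ c, AdjTo G (cross G a b) c →
      G.dist v g + G.dist g c = G.dist v c := by
  set S : Set ℕ := {n | ∃ c, AdjTo G (cross G a b) c ∧ G.dist v c = n} with hS
  have hSne : S.Nonempty := ⟨G.dist v a, a, adjTo_cross_base hG hab, rfl⟩
  obtain ⟨g, hg, hgd⟩ : sInf S ∈ S := Nat.sInf_mem hSne
  refine ⟨g, hg, fun c hc => ?_⟩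
  obtain ⟨m, ⟨m1, m2, m3⟩, -⟩ := hG.2 v g c
  have hmN : AdjTo G (cross G a b) m := carConv hG hab hg hc m3
  have hmin : sInf S ≤ G.dist v m := Nat.sInf_le ⟨m, hmN, rfl⟩
  have hmg : m = g := dist0 hG (by omega)
  rw [hmg] at m2
  exact m2

/-- find a crossing edge of the wall `(a,b)` between two points on opposite sides -/
lemma find_crossing (hG : IsMedianGraph G) {a b : V} (hab : G.Adj a b) :
    ∀ n : ℕ, ∀ {p q : V}, G.dist p q = n →
      G.dist p b = G.dist p a + 1 → G.dist q a = G.dist q b + 1 →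
      ∃ s t : V, G.Adj s t ∧
        (G.dist p s + G.dist s q = G.dist p q) ∧ (G.dist p t + G.dist t q = G.dist p q) ∧
        G.dist s b = G.dist s a + 1 ∧ G.dist t a = G.dist t b + 1 := by
  intro n
  induction n using Nat.strong_induction_on with
  | _ n IH =>
  intro p q hn hp hq
  have hn0 : n ≠ 0 := by
    intro h
    have hpq : p = q := dist0 hG (by omega)
    rw [hpq] at hp
    omega
  obtain ⟨p₁, hpp1, hp1q⟩ := step hG (show G.dist p q = (n-1)+1 by omega)
  have e0 : G.dist p p₁ = 1 := adj1 hpp1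
  rcases dichot hG hab p₁ with h1 | h1
  · obtain ⟨s, t, hst, bs, bt, sA, tB⟩ := IH (n-1) (by omega) hp1q h1 hq
    have trs : G.dist p s ≤ G.dist p p₁ + G.dist p₁ s := hG.1.dist_triangle
    have trs2 : G.dist p q ≤ G.dist p s + G.dist s q := hG.1.dist_triangle
    have trt : G.dist p t ≤ G.dist p p₁ + G.dist p₁ t := hG.1.dist_triangle
    have trt2 : G.dist p q ≤ G.dist p t + G.dist t q := hG.1.dist_triangle
    exact ⟨s, t, hst, by omega, by omega, sA, tB⟩
  · have hps : G.dist p p = 0 := SimpleGraph.dist_self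
    exact ⟨p, p₁, hpp1, by omega, by omega, hp, h1⟩

/-- two carrier points of the wall `(c₀,d₀)`, on the same side of it and on opposite
sides of the wall `(a,b)`, joined by an edge, give a square, hence transversality -/
lemma square (hG : IsMedianGraph G) {a b c₀ d₀ s t : V} (hab : G.Adj a b) (hcd : G.Adj c₀ d₀)
    (hsA : G.dist s b = G.dist s a + 1) (htB : G.dist t a = G.dist t b + 1) (hst : G.Adj s t)
    (hs1 : G.dist s d₀ = G.dist s c₀ + 1) (ht1 : G.dist t d₀ = G.dist t c₀ + 1)
    (hsN : AdjTo G (cross G c₀ d₀) s) (htN : AdjTo G (cross G c₀ d₀) t)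
    (hneq : cross G a b ≠ cross G c₀ d₀) :
    Transverse G (cross G a b) (cross G c₀ d₀) := by
  obtain ⟨s', hss', hs's⟩ := adjTo_cross_iff.mp hsN
  obtain ⟨t', htt', ht's⟩ := adjTo_cross_iff.mp htN
  have hs'1 : G.dist s' c₀ = G.dist s' d₀ + 1 := by
    rcases hs's with ⟨h1, h2⟩ | ⟨h1, h2⟩ <;> omega
  have ht'1 : G.dist t' c₀ = G.dist t' d₀ + 1 := by
    rcases ht's with ⟨h1, h2⟩ | ⟨h1, h2⟩ <;> omega
  have hs'A : G.dist s' b = G.dist s' a + 1 := by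
    rcases dichot hG hab s' with h | h
    · exact h
    · exfalso
      have e1 : cross G s s' = cross G a b := cross_transfer hG hab hsA h hss'
      have e2 : cross G s s' = cross G c₀ d₀ := cross_transfer hG hcd hs1 hs'1 hss'
      exact hneq (e1.symm.trans e2)
  have ht'B : G.dist t' a = G.dist t' b + 1 := by
    rcases dichot hG hab t' with h | h
    · exfalso
      have e1 : cross G t' t = cross G a b := cross_transfer hG hab h htB htt'.symm
      have e2 : cross G t t' = cross G c₀ d₀ := cross_transfer hG hcd ht1 ht'1 htt'
      rw [cross_swap (a := t') (b := t)] at e1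
      exact hneq (e1.symm.trans e2)
    · exact h
  have es : G.dist s s' = 1 := adj1 hss'
  have et : G.dist t t' = 1 := adj1 htt'
  have est : G.dist s t = 1 := adj1 hst
  have ds't : G.dist s' t = 2 := by
    have hne0 : s' ≠ t := by intro h; rw [h] at hs'1; omega
    have hnadj : ¬ G.Adj s' t := fun h => no_triangle hG hss'.symm hst h
    have hne1 : G.dist s' t ≠ 1 := fun h => hnadj (dist_eq_one_iff_adj.mp h)
    have tr : G.dist s' t ≤ G.dist s' s + G.dist s t := hG.1.dist_triangle
    have cs : G.dist s' s = G.dist s s' := SimpleGraph.dist_comm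
    have hne00 : G.dist s' t ≠ 0 := fun h => hne0 (dist0 hG h)
    omega
  have dst' : G.dist s t' = 2 := by
    have hne0 : s ≠ t' := by intro h; rw [h] at hsA; omega
    have hnadj : ¬ G.Adj s t' := fun h => no_triangle hG hst htt' h
    have hne1 : G.dist s t' ≠ 1 := fun h => hnadj (dist_eq_one_iff_adj.mp h)
    have tr : G.dist s t' ≤ G.dist s t + G.dist t t' := hG.1.dist_triangle
    have hne00 : G.dist s t' ≠ 0 := fun h => hne0 (dist0 hG h)
    omega
  -- the fourth corner: median of (s', t', t)
  obtain ⟨m, ⟨m1, m2, m3⟩, -⟩ := hG.2 s' t' t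
  have ctt' : G.dist t' t = 1 := by rw [SimpleGraph.dist_comm]; exact et
  have cs't : G.dist s' t = 2 := ds't
  have hm : G.dist t' m = 0 ∨ G.dist m t = 0 := by omega
  have hs't' : G.dist s' t' = 1 := by
    rcases hm with hm | hm
    · have : t' = m := dist0 hG hm
      rw [← this] at m2
      have ct't : G.dist t' t = 1 := ctt'
      omega
    · exfalso
      have hmt : m = t := dist0 hG hm
      rw [hmt] at m1
      -- m1 : d s' t + d t t' = d s' t' = 3, so s is between s' and t'
      have hbtw : G.dist s' s + G.dist s t' = G.dist s' t' := by
        have cs : G.dist s' s = G.dist s s' := SimpleGraph.dist_comm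
        omega
      have := conv hG hcd.symm (G.dist s' s) rfl hs'1 ht'1 hbtw
      omega
  have hadj' : G.Adj s' t' := dist_eq_one_iff_adj.mp hs't'
  exact ⟨s, t, s', t', ⟨hst, Or.inl ⟨hsA, htB⟩⟩, ⟨hadj', Or.inl ⟨hs'A, ht'B⟩⟩,
    ⟨hss', Or.inl ⟨hs1, hs'1⟩⟩, ⟨htt', Or.inl ⟨ht1, ht'1⟩⟩, hst, hadj', hss', htt'⟩

/-- transversality from separation: if the wall `(a,b)` separates two carrier points of
another hyperplane, the two hyperplanes are transverse -/
lemma transK (hG : IsMedianGraph G) {a b c₀ d₀ : V} (hab : G.Adj a b) (hcd : G.Adj c₀ d₀)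
    (hneq : cross G a b ≠ cross G c₀ d₀) {p q : V}
    (hp : AdjTo G (cross G c₀ d₀) p) (hq : AdjTo G (cross G c₀ d₀) q)
    (hpA : G.dist p b = G.dist p a + 1) (hqB : G.dist q a = G.dist q b + 1) :
    Transverse G (cross G a b) (cross G c₀ d₀) := by
  obtain ⟨s, t, hst, bs, bt, sA, tB⟩ := find_crossing hG hab (G.dist p q) rfl hpA hqB
  have hsN : AdjTo G (cross G c₀ d₀) s := carConv hG hcd hp hq bs
  have htN : AdjTo G (cross G c₀ d₀) t := carConv hG hcd hp hq bt
  rcases dichot hG hcd s with hs1 | hs1 <;> rcases dichot hG hcd t with ht1 | ht1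
  · exact square hG hab hcd sA tB hst hs1 ht1 hsN htN hneq
  · exfalso
    have e1 : cross G s t = cross G a b := cross_transfer hG hab sA tB hst
    have e2 : cross G s t = cross G c₀ d₀ := cross_transfer hG hcd hs1 ht1 hst
    exact hneq (e1.symm.trans e2)
  · exfalso
    have e1 : cross G s t = cross G a b := cross_transfer hG hab sA tB hst
    have e2 : cross G t s = cross G c₀ d₀ := cross_transfer hG hcd ht1 hs1 hst.symm
    rw [cross_swap (a := t) (b := s)] at e2
    exact hneq (e1.symm.trans e2)
  · have h2 : cross G c₀ d₀ = cross G d₀ c₀ := cross_swap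
    rw [h2] at hsN htN hneq ⊢
    exact square hG hab hcd.symm sA tB hst hs1 ht1 hsN htN hneq

end MG

/-- if the link of `v` is not a cone (and `Wv G v` is finite), then `Wv G v`
is a maximal clique of the contact graph, realized by no other vertex. -/
theorem Wv_max_clique_of_not_cone (G : SimpleGraph V) (hG : IsMedianGraph G)
    (v : V) (hfin : (Wv G v).Finite) (hnc : ¬ LinkIsCone G v) :
    IsMaxContactClique G (Wv G v) ∧ ∀ w : V, Wv G w = Wv G v → w = v := by
  have clique : IsContactClique G (Wv G v) :=
    ⟨fun h hh => hh.1, fun h hh h' hh' _ => ⟨v, hh.2, hh'.2⟩⟩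
  refine ⟨⟨clique, ?_⟩, ?_⟩
  · -- maximality
    intro C' hC' hsub
    refine Set.Subset.antisymm ?_ hsub
    intro u hu
    by_contra hunot
    obtain ⟨c₀, d₀, hcd, rfl⟩ := MG.hyp_to_cross hG (hC'.1 u hu)
    have hvN : ¬ AdjTo G (MG.cross G c₀ d₀) v := fun h => hunot ⟨MG.cross_is_hyp hG hcd, h⟩
    obtain ⟨g, hgN, hgate⟩ := MG.exists_gate hG hcd v
    have hvg : G.dist v g ≠ 0 := by
      intro h
      rw [MG.dist0 hG h] at hvN
      exact hvN hgN
    obtain ⟨x, hvx, hxg⟩ := MG.step hG (show G.dist v g = (G.dist v g - 1) + 1 by omega)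
    have hvxd : G.dist v x = 1 := MG.adj1 hvx
    have hvA : G.dist v x = G.dist v v + 1 := by rw [SimpleGraph.dist_self]; omega
    have hmemWv : MG.cross G v x ∈ Wv G v :=
      ⟨MG.cross_is_hyp hG hvx, ⟨(v, x), MG.edge_mem_cross hvx, Or.inl rfl⟩⟩
    have hcar : ∀ c, AdjTo G (MG.cross G c₀ d₀) c → G.dist c v = G.dist c x + 1 := by
      intro c hc
      have hg1 := hgate c hc
      have tr1 : G.dist x c ≤ G.dist x g + G.dist g c := hG.1.dist_triangle
      have tr2 : G.dist v c ≤ G.dist v x + G.dist x c := hG.1.dist_triangle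
      have c1 : G.dist c v = G.dist v c := SimpleGraph.dist_comm
      have c2 : G.dist c x = G.dist x c := SimpleGraph.dist_comm
      omega
    apply hnc
    refine ⟨MG.cross G v x, hmemWv, ?_⟩
    intro h' hh' hne
    obtain ⟨c₁, d₁, hcd1, rfl⟩ := MG.hyp_to_cross hG hh'.1
    have huneq : MG.cross G c₀ d₀ ≠ MG.cross G c₁ d₁ := by
      intro h; rw [h] at hunot; exact hunot hh'
    obtain ⟨y, hyu, hyh'⟩ := hC'.2 _ hu _ (hsub hh') huneq
    have hyx : G.dist y v = G.dist y x + 1 := hcar y hyu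
    exact MG.transK hG hvx hcd1 (Ne.symm hne) hh'.2 hyh' hvA hyx
  · -- uniqueness
    intro w hw
    by_contra hne
    apply hnc
    have hvw : G.dist v w ≠ 0 := fun h => hne ((MG.dist0 hG h).symm)
    obtain ⟨x, hvx, hxw⟩ := MG.step hG (show G.dist v w = (G.dist v w - 1) + 1 by omega)
    have hvxd : G.dist v x = 1 := MG.adj1 hvx
    have hvA : G.dist v x = G.dist v v + 1 := by rw [SimpleGraph.dist_self]; omega
    have hwB : G.dist w v = G.dist w x + 1 := by
      have c1 : G.dist w v = G.dist v w := SimpleGraph.dist_comm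
      have c2 : G.dist w x = G.dist x w := SimpleGraph.dist_comm
      omega
    have hmemWv : MG.cross G v x ∈ Wv G v :=
      ⟨MG.cross_is_hyp hG hvx, ⟨(v, x), MG.edge_mem_cross hvx, Or.inl rfl⟩⟩
    refine ⟨MG.cross G v x, hmemWv, ?_⟩
    intro h' hh' hne'
    obtain ⟨c₁, d₁, hcd1, rfl⟩ := MG.hyp_to_cross hG hh'.1
    have hwadj : AdjTo G (MG.cross G c₁ d₁) w := by
      have hmem : MG.cross G c₁ d₁ ∈ Wv G w := by rw [hw]; exact hh'
      exact hmem.2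
    exact MG.transK hG hvx hcd1 (Ne.symm hne') hh'.2 hwadj hvA hwB
end

section
/- Let X be a uniformly locally finite CAT(0) cube complex with no extremal vertices. Then the natural homomorphism ι : Aut(X) → Aut(C(X)) induced by the action on hyperplanes is injective; moreover there is a homomorphism ρ : Aut(C(X)) → Sym(X^(0)) with ρ ∘ ι = id. -/
open SimpleGraph

variable {V : Type*}

namespace MedianDev

variable {G : SimpleGraph V}

lemma dz (hG : IsMedianGraph G) {x y : V} (h : G.dist x y = 0) : x = y :=
  (hG.1.dist_eq_zero_iff).mp h

lemma dist_adj {x y : V} (h : G.dist x y = 1) : G.Adj x y :=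
  SimpleGraph.dist_eq_one_iff_adj.mp h

lemma adj_dist {x y : V} (h : G.Adj x y) : G.dist x y = 1 :=
  SimpleGraph.dist_eq_one_iff_adj.mpr h

lemma tri (hG : IsMedianGraph G) (x y z : V) : G.dist x z ≤ G.dist x y + G.dist y z :=
  hG.1.dist_triangle

lemma exists_next (hG : IsMedianGraph G) {x y : V} {n : ℕ} (h : G.dist x y = n + 1) :
    ∃ z, G.Adj x z ∧ G.dist z y = n := by
  obtain ⟨p, hp⟩ := hG.1.exists_walk_length_eq_dist x y
  cases p with
  | nil => rw [h] at hp; simp at hp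
  | @cons _ z _ hadj q =>
    refine ⟨z, hadj, le_antisymm ?_ ?_⟩
    · have h1 := SimpleGraph.dist_le q
      have : q.length + 1 = n + 1 := by rw [← h, ← hp]; simp [SimpleGraph.Walk.length_cons]
      omega
    · have h2 := tri hG x z y
      have h3 := adj_dist hadj
      omega

/-- `Side G a b x` : `x` is strictly closer to `a` than to `b`. -/
def Side (G : SimpleGraph V) (a b x : V) : Prop := G.dist x a + 1 = G.dist x b

lemma step (hG : IsMedianGraph G) {a b : V} (hab : G.Adj a b) (x : V) :
    Side G a b x ∨ Side G b a x := by
  obtain ⟨m, ⟨h1, h2, h3⟩, -⟩ := hG.2 x a b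
  rw [adj_dist hab] at h3
  rcases (by omega : G.dist a m = 0 ∧ G.dist m b = 1 ∨ G.dist a m = 1 ∧ G.dist m b = 0)
    with ⟨h4, h5⟩ | ⟨h4, h5⟩
  · have e1 : G.dist m a = 0 := by rwa [SimpleGraph.dist_comm]
    left; unfold Side; omega
  · have hmb : m = b := dz hG h5
    rw [hmb] at h1
    have e3 : G.dist b a = 1 := by rw [SimpleGraph.dist_comm]; exact adj_dist hab
    right; unfold Side; omega

lemma side_irrefl {a b x : V} (h1 : Side G a b x) (h2 : Side G b a x) : False := by
  unfold Side at *; omega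

lemma side_dichot (hG : IsMedianGraph G) {a b : V} (hab : G.Adj a b) {x : V}
    (h : ¬ Side G a b x) : Side G b a x := (step hG hab x).resolve_left h
lemma cross_data (hG : IsMedianGraph G) {a b x x' : V} (hxx' : G.Adj x x')
    (hx : Side G a b x) (hx' : Side G b a x') :
    G.dist x a = G.dist x' b ∧ G.dist x b = G.dist x' b + 1 ∧
      G.dist x' a = G.dist x' b + 1 := by
  have s1 := step hG hxx' a
  have s2 := step hG hxx' b
  have c1 : G.dist a x = G.dist x a := SimpleGraph.dist_comm
  have c2 : G.dist a x' = G.dist x' a := SimpleGraph.dist_comm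
  have c3 : G.dist b x = G.dist x b := SimpleGraph.dist_comm
  have c4 : G.dist b x' = G.dist x' b := SimpleGraph.dist_comm
  unfold Side at *
  rcases s1 with s1 | s1 <;> rcases s2 with s2 | s2 <;> omega

lemma SQ (hG : IsMedianGraph G) {a b x x' w : V} (hab : G.Adj a b) (hxx' : G.Adj x x')
    (hx : Side G a b x) (hx' : Side G b a x') (hw' : G.Adj x' w) (hw : Side G a b w) :
    w = x := by
  by_contra hne
  obtain ⟨hxa, hxb, hx'a⟩ := cross_data hG hxx' hx hx'
  have hwd : G.dist w a = G.dist x' b ∧ G.dist w b = G.dist x' b + 1 := by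
    have s1 := step hG hw' a
    have s2 := step hG hw' b
    have c1 : G.dist a x' = G.dist x' a := SimpleGraph.dist_comm
    have c2 : G.dist a w = G.dist w a := SimpleGraph.dist_comm
    have c3 : G.dist b x' = G.dist x' b := SimpleGraph.dist_comm
    have c4 : G.dist b w = G.dist w b := SimpleGraph.dist_comm
    unfold Side at *
    rcases s1 with s1 | s1 <;> rcases s2 with s2 | s2 <;> omega
  obtain ⟨hwa, hwb⟩ := hwd
  have hxw : G.dist x w = 2 := by
    have t1 := tri hG x x' w
    rw [adj_dist hxx', adj_dist hw'] at t1
    have hne0 : G.dist x w ≠ 0 := fun h0 => hne (dz hG h0).symm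
    have hne1 : G.dist x w ≠ 1 := by
      intro h1
      have s3 := step hG (dist_adj h1) a
      have c1 : G.dist a x = G.dist x a := SimpleGraph.dist_comm
      have c2 : G.dist a w = G.dist w a := SimpleGraph.dist_comm
      unfold Side at s3
      rcases s3 with s3 | s3 <;> omega
    omega
  obtain ⟨m, ⟨m1, m2, m3⟩, -⟩ := hG.2 x w a
  have cm : G.dist w m = G.dist m w := SimpleGraph.dist_comm
  have hxm : G.dist x m = 1 := by omega
  have hmw : G.dist m w = 1 := by omega
  have hma : G.dist m a + 1 = G.dist x a := by omega
  have hmb : G.dist m b = G.dist x' b := by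
    have s3 := step hG hab m
    have t4 := tri hG x m b
    unfold Side at s3
    rcases s3 with s3 | s3 <;> omega
  obtain ⟨m', hm', hu⟩ := hG.2 x w b
  have p1 : x' = m' := by
    refine hu x' ⟨?_, ?_, ?_⟩
    · rw [adj_dist hxx', adj_dist hw', hxw]
    · rw [adj_dist hxx']; omega
    · have cw : G.dist w x' = G.dist x' w := SimpleGraph.dist_comm
      rw [cw, adj_dist hw']; omega
  have p2 : m = m' := by
    refine hu m ⟨?_, ?_, ?_⟩
    · omega
    · omega
    · omega
  have hxm' : x' = m := p1.trans p2.symm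
  rw [hxm'] at hx'a
  omega

lemma noBack (hG : IsMedianGraph G) {a b : V} (hab : G.Adj a b) :
    ∀ α : ℕ, ∀ x x' y : V, G.Adj x x' → Side G a b x → Side G b a x' → Side G a b y →
      G.dist x' b = α → G.dist y x = G.dist y x' + 1 → False := by
  intro α
  induction α using Nat.strong_induction_on with
  | _ α IH =>
    intro x x' y hxx' hx hx' hy hα hbad
    obtain ⟨hxa, hxb, hx'a⟩ := cross_data hG hxx' hx hx'
    rcases Nat.eq_zero_or_pos α with h0 | hpos
    · subst h0
      have hx'b : x' = b := dz hG hα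
      have hxa0 : x = a := dz hG (by omega)
      rw [hxa0, hx'b] at hbad
      unfold Side at hy
      omega
    · obtain ⟨α', rfl⟩ : ∃ α', α = α' + 1 := ⟨α - 1, by omega⟩
      obtain ⟨w, hx'w, hwb⟩ := exists_next hG hα
      have hwa : G.dist w a = α' + 1 := by
        have s1 := step hG hx'w a
        have s2 := step hG hab w
        have c1 : G.dist a x' = G.dist x' a := SimpleGraph.dist_comm
        have c2 : G.dist a w = G.dist w a := SimpleGraph.dist_comm
        unfold Side at s1 s2
        rcases s1 with s1 | s1 <;> rcases s2 with s2 | s2 <;> omega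
      have hwB : Side G b a w := by unfold Side; omega
      have hxw2 : G.dist x w = 2 := by
        have t1 := tri hG x x' w
        rw [adj_dist hxx', adj_dist hx'w] at t1
        have hne1 : G.dist x w ≠ 1 := by
          intro h1
          have hq := SQ hG (G.adj_symm hab) (G.adj_symm hxx') hx' hx (dist_adj h1) hwB
          rw [hq] at hwb
          omega
        have hne0 : G.dist x w ≠ 0 := by
          intro h0
          rw [dz hG h0] at hxb
          omega
        omega
      obtain ⟨m, ⟨m1, m2, m3⟩, -⟩ := hG.2 x w a
      have cm : G.dist w m = G.dist m w := SimpleGraph.dist_comm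
      have hxm : G.dist x m = 1 := by omega
      have hmw : G.dist m w = 1 := by omega
      have hma : G.dist m a = α' := by omega
      have hmb : G.dist m b = α' + 1 := by
        have s3 := step hG hab m
        have t4 := tri hG x m b
        unfold Side at s3
        rcases s3 with s3 | s3 <;> omega
      have hmA : Side G a b m := by unfold Side; omega
      rcases step hG hx'w y with s4 | s4
      · -- d y w = d y x' + 1
        unfold Side at s4
        rcases step hG (dist_adj hxm) y with s5 | s5 <;> unfold Side at s5
        · -- d y m = d y x + 1 = d y x' + 2 : recurse
          exact IH α' (by omega) m w y (dist_adj hmw) hmA hwB hy hwb (by omega)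
        · -- d y m = d y x - 1 = d y x' : two medians of (x,w,y)
          obtain ⟨m', hm', hu⟩ := hG.2 x w y
          have cyx : G.dist x y = G.dist y x := SimpleGraph.dist_comm
          have cyw : G.dist w y = G.dist y w := SimpleGraph.dist_comm
          have cyx' : G.dist x' y = G.dist y x' := SimpleGraph.dist_comm
          have cym : G.dist m y = G.dist y m := SimpleGraph.dist_comm
          have cwx' : G.dist w x' = G.dist x' w := SimpleGraph.dist_comm
          have e1 : G.dist x x' = 1 := adj_dist hxx'
          have e2 : G.dist x' w = 1 := adj_dist hx'w
          have p1 : x' = m' := by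
            refine hu x' ⟨?_, ?_, ?_⟩ <;> omega
          have p2 : m = m' := by
            refine hu m ⟨?_, ?_, ?_⟩ <;> omega
          have hxm' : x' = m := p1.trans p2.symm
          rw [hxm'] at hx'a
          omega
      · -- d y w + 1 = d y x'
        unfold Side at s4
        have t5 := tri hG y m x
        have cmx : G.dist m x = G.dist x m := SimpleGraph.dist_comm
        have s6 := step hG (dist_adj hmw) y
        unfold Side at s6
        rcases s6 with s6 | s6
        · omega
        · exact IH α' (by omega) m w y (dist_adj hmw) hmA hwB hy hwb (by omega)

lemma crossDist (hG : IsMedianGraph G) {a b x x' y : V} (hab : G.Adj a b) (hxx' : G.Adj x x')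
    (hx : Side G a b x) (hx' : Side G b a x') (hy : Side G a b y) :
    G.dist y x' = G.dist y x + 1 := by
  rcases step hG hxx' y with s | s
  · exact s.symm
  · exact absurd (noBack hG hab (G.dist x' b) x x' y hxx' hx hx' hy rfl s.symm) (by simp)

lemma crossDistB (hG : IsMedianGraph G) {a b x x' y : V} (hab : G.Adj a b) (hxx' : G.Adj x x')
    (hx : Side G a b x) (hx' : Side G b a x') (hy : Side G b a y) :
    G.dist y x = G.dist y x' + 1 :=
  crossDist hG (G.adj_symm hab) (G.adj_symm hxx') hx' hx hy

lemma exists_cross (hG : IsMedianGraph G) {a b : V} (hab : G.Adj a b) :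
    ∀ n x z, G.dist x z = n → Side G a b x → Side G b a z →
    ∃ p q, G.Adj p q ∧ Side G a b p ∧ Side G b a q ∧
      G.dist x p + (1 + G.dist q z) = G.dist x z := by
  intro n
  induction n using Nat.strong_induction_on with
  | _ n IH =>
    intro x z hn hx hz
    rcases Nat.eq_zero_or_pos n with h0 | hpos
    · subst h0
      rw [dz hG hn] at hx
      exact absurd hx (fun h => side_irrefl h hz)
    · obtain ⟨n', rfl⟩ : ∃ n', n = n' + 1 := ⟨n - 1, by omega⟩
      obtain ⟨x₁, hxx₁, hx₁z⟩ := exists_next hG hn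
      rcases step hG hab x₁ with hs | hs
      · obtain ⟨p, q, hpq, hp, hq, he⟩ := IH n' (by omega) x₁ z hx₁z hs hz
        refine ⟨p, q, hpq, hp, hq, ?_⟩
        have t1 := tri hG x p z
        have t2 := tri hG p q z
        have t3 := tri hG x x₁ p
        rw [adj_dist hxx₁] at t3
        rw [adj_dist hpq] at t2
        omega
      · refine ⟨x, x₁, hxx₁, hx, hs, ?_⟩
        have : G.dist x x = 0 := by simp
        omega

lemma between_side (hG : IsMedianGraph G) {a b x y z : V} (hab : G.Adj a b)
    (hx : Side G a b x) (hy : Side G a b y)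
    (hbet : G.dist x z + G.dist z y = G.dist x y) : Side G a b z := by
  by_contra hzc
  have hz := side_dichot hG hab hzc
  obtain ⟨p, q, hpq, hp, hq, heq⟩ := exists_cross hG hab (G.dist x z) x z rfl hx hz
  have t1 := tri hG x p z
  have t2 := tri hG p q z
  rw [adj_dist hpq] at t2
  have hpz : G.dist p z = 1 + G.dist q z := by omega
  have t3 := tri hG p z y
  have t4 := tri hG x p y
  have hpy : G.dist p y = G.dist p z + G.dist z y := by omega
  have t5 := tri hG q z y
  have t6 := tri hG x q y
  have t7 := tri hG x p q
  rw [adj_dist hpq] at t7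
  have hqy : G.dist q y = G.dist q z + G.dist z y := by omega
  have hcd := crossDist hG hab hpq hp hq hy
  have c1 : G.dist y p = G.dist p y := SimpleGraph.dist_comm
  have c2 : G.dist y q = G.dist q y := SimpleGraph.dist_comm
  omega
/-- The Theta class of an (oriented) edge, as in `IsHyperplane`. -/
def ecl (G : SimpleGraph V) (e : V × V) : Set (V × V) :=
  {f | G.Adj f.1 f.2 ∧ Theta G e f}

lemma theta_iff (hG : IsMedianGraph G) {a b : V} (hab : G.Adj a b) (u v : V) :
    Theta G (a, b) (u, v) ↔
      (Side G a b u ∧ Side G b a v) ∨ (Side G b a u ∧ Side G a b v) := by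
  have su := step hG hab u
  have sv := step hG hab v
  have c1 : G.dist a u = G.dist u a := SimpleGraph.dist_comm
  have c2 : G.dist b u = G.dist u b := SimpleGraph.dist_comm
  have c3 : G.dist a v = G.dist v a := SimpleGraph.dist_comm
  have c4 : G.dist b v = G.dist v b := SimpleGraph.dist_comm
  show G.dist a u + G.dist b v ≠ G.dist a v + G.dist b u ↔ _
  unfold Side at *
  rcases su with su | su <;> rcases sv with sv | sv <;>
    constructor <;> intro h <;> omega

lemma wall_half (hG : IsMedianGraph G) {a b c d : V} (hab : G.Adj a b) (hcd : G.Adj c d)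
    (hc : Side G a b c) (hd : Side G b a d) :
    ∀ x, Side G c d x ↔ Side G a b x := by
  intro x
  constructor
  · intro hx
    by_contra hxc
    have hxb := side_dichot hG hab hxc
    have hcross := crossDistB hG hab hcd hc hd hxb
    unfold Side at hx
    omega
  · intro hx
    have hcross := crossDist hG hab hcd hc hd hx
    unfold Side
    omega

lemma side_neg_iff (hG : IsMedianGraph G) {a b c d : V} (hab : G.Adj a b) (hcd : G.Adj c d)
    (hw : ∀ x, Side G c d x ↔ Side G a b x) (x : V) : Side G d c x ↔ Side G b a x := by
  constructor
  · intro h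
    refine side_dichot hG hab fun hA => side_irrefl ((hw x).mpr hA) h
  · intro h
    refine side_dichot hG hcd fun hA => side_irrefl ((hw x).mp hA) h

lemma wall_eq (hG : IsMedianGraph G) {a b c d : V} (hab : G.Adj a b) (hcd : G.Adj c d)
    (ht : Theta G (a, b) (c, d)) :
    (∀ x, Side G c d x ↔ Side G a b x) ∨ (∀ x, Side G c d x ↔ Side G b a x) := by
  rcases (theta_iff hG hab c d).mp ht with ⟨hc, hd⟩ | ⟨hc, hd⟩
  · exact Or.inl (wall_half hG hab hcd hc hd)
  · exact Or.inr (wall_half hG (G.adj_symm hab) hcd hc hd)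

lemma ecl_eq_of_theta (hG : IsMedianGraph G) {a b c d : V} (hab : G.Adj a b) (hcd : G.Adj c d)
    (ht : Theta G (a, b) (c, d)) : ecl G (a, b) = ecl G (c, d) := by
  ext ⟨u, v⟩
  show G.Adj u v ∧ Theta G (a, b) (u, v) ↔ G.Adj u v ∧ Theta G (c, d) (u, v)
  refine and_congr_right fun huv => ?_
  rw [theta_iff hG hab u v, theta_iff hG hcd u v]
  rcases wall_eq hG hab hcd ht with hw | hw
  · simp only [hw u, hw v, side_neg_iff hG hab hcd hw u, side_neg_iff hG hab hcd hw v]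
  · have hw' : ∀ x, Side G c d x ↔ Side G b a x := hw
    simp only [hw' u, hw' v, side_neg_iff hG (G.adj_symm hab) hcd hw' u,
      side_neg_iff hG (G.adj_symm hab) hcd hw' v]
    tauto

lemma mem_ecl_self {a b : V} (hab : G.Adj a b) : (a, b) ∈ ecl G (a, b) := by
  refine ⟨hab, ?_⟩
  show G.dist a a + G.dist b b ≠ G.dist a b + G.dist b a
  have c1 : G.dist a a = 0 := by simp
  have c2 : G.dist b b = 0 := by simp
  have c3 : G.dist a b = 1 := adj_dist hab
  have c4 : G.dist b a = 1 := by rw [SimpleGraph.dist_comm]; exact c3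
  omega

lemma mem_ecl_iff (hG : IsMedianGraph G) {a b : V} (hab : G.Adj a b) (u v : V) :
    (u, v) ∈ ecl G (a, b) ↔ G.Adj u v ∧
      ((Side G a b u ∧ Side G b a v) ∨ (Side G b a u ∧ Side G a b v)) := by
  show G.Adj u v ∧ Theta G (a, b) (u, v) ↔ _
  exact and_congr_right fun h => theta_iff hG hab u v

lemma mem_ecl_swap (hG : IsMedianGraph G) {a b u v : V} (hab : G.Adj a b)
    (h : (u, v) ∈ ecl G (a, b)) : (v, u) ∈ ecl G (a, b) := by
  rw [mem_ecl_iff hG hab] at h ⊢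
  refine ⟨G.adj_symm h.1, ?_⟩
  tauto

lemma ecl_comm (a b : V) : ecl G (a, b) = ecl G (b, a) := by
  ext ⟨u, v⟩
  show G.Adj u v ∧ (G.dist a u + G.dist b v ≠ G.dist a v + G.dist b u) ↔
    G.Adj u v ∧ (G.dist b u + G.dist a v ≠ G.dist b v + G.dist a u)
  constructor <;> rintro ⟨h1, h2⟩ <;> exact ⟨h1, by omega⟩

lemma ecl_eq_of_mem (hG : IsMedianGraph G) {a b u v : V} (hab : G.Adj a b)
    (h : (u, v) ∈ ecl G (a, b)) : ecl G (a, b) = ecl G (u, v) :=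
  ecl_eq_of_theta hG hab h.1 h.2

lemma isHyp_iff {h : Set (V × V)} :
    IsHyperplane G h ↔ ∃ a b : V, G.Adj a b ∧ h = ecl G (a, b) := by
  constructor
  · rintro ⟨e, he, rfl⟩
    exact ⟨e.1, e.2, he, by rw [ecl]⟩
  · rintro ⟨a, b, hab, rfl⟩
    exact ⟨(a, b), hab, rfl⟩

lemma isHyp_ecl {a b : V} (hab : G.Adj a b) : IsHyperplane G (ecl G (a, b)) :=
  isHyp_iff.mpr ⟨a, b, hab, rfl⟩

lemma adjTo_iff (v : V) {h : Set (V × V)} :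
    AdjTo G h v ↔ ∃ w, (v, w) ∈ h ∨ (w, v) ∈ h := by
  constructor
  · rintro ⟨⟨p, q⟩, hpq, hv | hv⟩
    · subst hv; exact ⟨q, Or.inl hpq⟩
    · subst hv; exact ⟨p, Or.inr hpq⟩
  · rintro ⟨w, hm | hm⟩
    · exact ⟨(v, w), hm, Or.inl rfl⟩
    · exact ⟨(w, v), hm, Or.inr rfl⟩

lemma adjTo_ecl_iff (hG : IsMedianGraph G) {a b : V} (hab : G.Adj a b) (v : V) :
    AdjTo G (ecl G (a, b)) v ↔ ∃ w, G.Adj v w ∧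
      ((Side G a b v ∧ Side G b a w) ∨ (Side G b a v ∧ Side G a b w)) := by
  rw [adjTo_iff]
  constructor
  · rintro ⟨w, hm | hm⟩
    · rw [mem_ecl_iff hG hab] at hm
      exact ⟨w, hm.1, hm.2⟩
    · have := mem_ecl_swap hG hab hm
      rw [mem_ecl_iff hG hab] at this
      exact ⟨w, this.1, this.2⟩
  · rintro ⟨w, hvw, hside⟩
    exact ⟨w, Or.inl ((mem_ecl_iff hG hab v w).mpr ⟨hvw, hside⟩)⟩
lemma conv2 (hG : IsMedianGraph G) {a b x x' y z : V} (hab : G.Adj a b) (hxx' : G.Adj x x')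
    (hx : Side G a b x) (hx' : Side G b a x') (hy : Side G b a y) (hz : Side G a b z)
    (hbet : G.dist x z + G.dist z y = G.dist x y) :
    ∃ m, G.Adj z m ∧ Side G b a m := by
  have hx'z : G.dist x' z = G.dist x z + 1 := by
    have c1 : G.dist z x = G.dist x z := SimpleGraph.dist_comm
    have c2 : G.dist z x' = G.dist x' z := SimpleGraph.dist_comm
    rcases step hG hxx' z with s | s
    · unfold Side at s; omega
    · exfalso
      unfold Side at s
      have hb : G.dist x x' + G.dist x' z = G.dist x z := by
        rw [adj_dist hxx']; omega
      exact side_irrefl (between_side hG hab hx hz hb) hx'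
  have hcd := crossDistB hG hab hxx' hx hx' hy
  have c3 : G.dist y x = G.dist x y := SimpleGraph.dist_comm
  have c4 : G.dist y x' = G.dist x' y := SimpleGraph.dist_comm
  obtain ⟨m, ⟨m1, m2, m3⟩, -⟩ := hG.2 x' y z
  have c5 : G.dist y z = G.dist z y := SimpleGraph.dist_comm
  have c6 : G.dist m y = G.dist y m := SimpleGraph.dist_comm
  have hmz : G.dist m z = 1 := by omega
  have hmB : Side G b a m := between_side hG (G.adj_symm hab) hx' hy m1
  have c7 : G.dist z m = G.dist m z := SimpleGraph.dist_comm
  exact ⟨m, dist_adj (by omega), hmB⟩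

lemma conv1 (hG : IsMedianGraph G) {a b x x' y y' z : V} (hab : G.Adj a b)
    (hxx' : G.Adj x x') (hyy' : G.Adj y y')
    (hx : Side G a b x) (hx' : Side G b a x') (hy : Side G a b y) (hy' : Side G b a y')
    (hz : Side G a b z)
    (hbet : G.dist x z + G.dist z y = G.dist x y) :
    ∃ m, G.Adj z m ∧ Side G b a m := by
  have czx : G.dist z x = G.dist x z := SimpleGraph.dist_comm
  have czy : G.dist z y = G.dist y z := SimpleGraph.dist_comm
  have hx'z : G.dist x' z = G.dist x z + 1 := by
    have c2 : G.dist z x' = G.dist x' z := SimpleGraph.dist_comm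
    rcases step hG hxx' z with s | s
    · unfold Side at s; omega
    · exfalso
      unfold Side at s
      have hb : G.dist x x' + G.dist x' z = G.dist x z := by
        rw [adj_dist hxx']; omega
      exact side_irrefl (between_side hG hab hx hz hb) hx'
  have hy'z : G.dist y' z = G.dist z y + 1 := by
    have c2 : G.dist z y' = G.dist y' z := SimpleGraph.dist_comm
    rcases step hG hyy' z with s | s
    · unfold Side at s; omega
    · exfalso
      unfold Side at s
      have hb : G.dist z y' + G.dist y' y = G.dist z y := by
        have : G.dist y' y = 1 := by
          rw [SimpleGraph.dist_comm]; exact adj_dist hyy'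
        omega
      exact side_irrefl (between_side hG hab hz hy hb) hy'
  have ht : G.dist x' y' + 1 ≥ G.dist x y := by
    by_contra hlt
    push_neg at hlt
    have t8 := tri hG x' y' y
    have t9 := tri hG x x' y
    have cy'y : G.dist y' y = 1 := by rw [SimpleGraph.dist_comm]; exact adj_dist hyy'
    have e1 : G.dist x x' = 1 := adj_dist hxx'
    have hb : G.dist x x' + G.dist x' y = G.dist x y := by omega
    exact side_irrefl (between_side hG hab hx hy hb) hx'
  obtain ⟨m, ⟨m1, m2, m3⟩, -⟩ := hG.2 x' y' z
  have c6 : G.dist m y' = G.dist y' m := SimpleGraph.dist_comm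
  have hmz : G.dist m z = 0 ∨ G.dist m z = 1 := by omega
  rcases hmz with hmz | hmz
  · exfalso
    have hmz' : m = z := dz hG hmz
    rw [hmz'] at m1
    exact side_irrefl (between_side hG (G.adj_symm hab) hx' hy' m1) hz
  · have hmB : Side G b a m := between_side hG (G.adj_symm hab) hx' hy' m1
    have c7 : G.dist z m = G.dist m z := SimpleGraph.dist_comm
    exact ⟨m, dist_adj (by omega), hmB⟩

lemma conv_master (hG : IsMedianGraph G) {a b x y z : V} (hab : G.Adj a b)
    (hx : AdjTo G (ecl G (a, b)) x) (hy : AdjTo G (ecl G (a, b)) y)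
    (hbet : G.dist x z + G.dist z y = G.dist x y) (hz : Side G a b z) :
    AdjTo G (ecl G (a, b)) z := by
  obtain ⟨wx, hxwx, hsx⟩ := (adjTo_ecl_iff hG hab x).mp hx
  obtain ⟨wy, hywy, hsy⟩ := (adjTo_ecl_iff hG hab y).mp hy
  have hbet' : G.dist y z + G.dist z x = G.dist y x := by
    have c1 : G.dist y z = G.dist z y := SimpleGraph.dist_comm
    have c2 : G.dist z x = G.dist x z := SimpleGraph.dist_comm
    have c3 : G.dist y x = G.dist x y := SimpleGraph.dist_comm
    omega
  have key : ∃ m, G.Adj z m ∧ Side G b a m := by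
    rcases hsx with ⟨hxA, hwxB⟩ | ⟨hxB, hwxA⟩
    · rcases hsy with ⟨hyA, hwyB⟩ | ⟨hyB, hwyA⟩
      · exact conv1 hG hab hxwx hywy hxA hwxB hyA hwyB hz hbet
      · exact conv2 hG hab hxwx hxA hwxB hyB hz hbet
    · rcases hsy with ⟨hyA, hwyB⟩ | ⟨hyB, hwyA⟩
      · exact conv2 hG hab hywy hyA hwyB hxB hz hbet'
      · exact absurd (between_side hG (G.adj_symm hab) hxB hyB hbet) fun h => side_irrefl hz h
  obtain ⟨m, hzm, hmB⟩ := key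
  exact (adjTo_ecl_iff hG hab z).mpr ⟨m, hzm, Or.inl ⟨hz, hmB⟩⟩

lemma carrier_conv (hG : IsMedianGraph G) {a b x y z : V} (hab : G.Adj a b)
    (hx : AdjTo G (ecl G (a, b)) x) (hy : AdjTo G (ecl G (a, b)) y)
    (hbet : G.dist x z + G.dist z y = G.dist x y) :
    AdjTo G (ecl G (a, b)) z := by
  rcases step hG hab z with hz | hz
  · exact conv_master hG hab hx hy hbet hz
  · rw [ecl_comm a b] at hx hy ⊢
    exact conv_master hG (G.adj_symm hab) hx hy hbet hz

lemma carrier_conv' (hG : IsMedianGraph G) {h : Set (V × V)} (hh : IsHyperplane G h)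
    {x y z : V} (hx : AdjTo G h x) (hy : AdjTo G h y)
    (hbet : G.dist x z + G.dist z y = G.dist x y) : AdjTo G h z := by
  obtain ⟨a, b, hab, rfl⟩ := isHyp_iff.mp hh
  exact carrier_conv hG hab hx hy hbet

lemma carrier_nonempty {a b : V} (hab : G.Adj a b) : AdjTo G (ecl G (a, b)) a :=
  ⟨(a, b), mem_ecl_self hab, Or.inl rfl⟩

lemma carrier_nonempty' {h : Set (V × V)} (hh : IsHyperplane G h) : ∃ v, AdjTo G h v := by
  obtain ⟨a, b, hab, rfl⟩ := isHyp_iff.mp hh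
  exact ⟨a, carrier_nonempty hab⟩
/-- Convex subsets of a graph. -/
def Convex (G : SimpleGraph V) (S : Set V) : Prop :=
  ∀ ⦃x y z : V⦄, x ∈ S → y ∈ S → G.dist x z + G.dist z y = G.dist x y → z ∈ S

lemma convex_inter {S T : Set V} (hS : Convex G S) (hT : Convex G T) : Convex G (S ∩ T) :=
  fun _ _ _ hx hy hb => ⟨hS hx.1 hy.1 hb, hT hx.2 hy.2 hb⟩

lemma helly (hG : IsMedianGraph G) (v₀ : V) :
    ∀ n (s : Finset (Set V)), s.card = n → (∀ A ∈ s, Convex G A) →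
      (∀ A ∈ s, ∀ B ∈ s, (A ∩ B).Nonempty) → ∃ p, ∀ A ∈ s, p ∈ A := by
  intro n
  induction n using Nat.strong_induction_on with
  | _ n IH =>
    classical
    intro s hcard hconv hpair
    rcases Nat.lt_or_ge n 2 with hn | hn
    · by_cases hs : s.Nonempty
      · obtain ⟨A, hA⟩ := hs
        obtain ⟨x, hx⟩ := hpair A hA A hA
        refine ⟨x, fun B hB => ?_⟩
        have hBA : B = A := Finset.card_le_one.mp (by omega) B hB A hA
        rw [hBA]; exact hx.1
      · exact ⟨v₀, fun A hA => absurd ⟨A, hA⟩ hs⟩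
    · obtain ⟨A, hA, B, hB, hAB⟩ := Finset.one_lt_card.mp (show 1 < s.card by omega)
      set s' := insert (A ∩ B) ((s.erase A).erase B) with hs'
      have hBe : B ∈ s.erase A := Finset.mem_erase.mpr ⟨Ne.symm hAB, hB⟩
      have hsub : ∀ C ∈ s', C = A ∩ B ∨ C ∈ s := by
        intro C hC
        rcases Finset.mem_insert.mp hC with h | h
        · exact Or.inl h
        · exact Or.inr (Finset.mem_of_mem_erase (Finset.mem_of_mem_erase h))
      have hcard' : s'.card < n := by
        have h2 : ((s.erase A).erase B).card = n - 2 := by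
          rw [Finset.card_erase_of_mem hBe, Finset.card_erase_of_mem hA, hcard]
          omega
        have h3 := Finset.card_insert_le (A ∩ B) ((s.erase A).erase B)
        rw [← hs'] at h3
        omega
      have hconv' : ∀ C ∈ s', Convex G C := fun C hC =>
        (hsub C hC).elim (fun h => h ▸ convex_inter (hconv A hA) (hconv B hB)) (hconv C)
      have key : ∀ D ∈ s, ((A ∩ B) ∩ D).Nonempty := by
        intro D hD
        obtain ⟨xx, hx1, hx2⟩ := hpair A hA D hD
        obtain ⟨yy, hy1, hy2⟩ := hpair B hB D hD
        obtain ⟨zz, hz1, hz2⟩ := hpair A hA B hB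
        obtain ⟨m, ⟨m1, m2, m3⟩, -⟩ := hG.2 xx yy zz
        exact ⟨m, ⟨hconv A hA hx1 hz1 m2, hconv B hB hy1 hz2 m3⟩, hconv D hD hx2 hy2 m1⟩
      have hpair' : ∀ C ∈ s', ∀ D ∈ s', (C ∩ D).Nonempty := by
        intro C hC D hD
        rcases hsub C hC with rfl | hCs
        · rcases hsub D hD with rfl | hDs
          · obtain ⟨z, hz⟩ := hpair A hA B hB
            exact ⟨z, hz, hz⟩
          · exact key D hDs
        · rcases hsub D hD with rfl | hDs
          · obtain ⟨w, hw1, hw2⟩ := key C hCs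
            exact ⟨w, hw2, hw1⟩
          · exact hpair C hCs D hDs
      obtain ⟨p, hp⟩ := IH s'.card hcard' s' rfl hconv' hpair'
      refine ⟨p, fun C hC => ?_⟩
      by_cases h1 : C = A
      · subst h1; exact (hp _ (Finset.mem_insert_self _ _)).1
      · by_cases h2 : C = B
        · subst h2; exact (hp _ (Finset.mem_insert_self _ _)).2
        · exact hp C (Finset.mem_insert_of_mem
            (Finset.mem_erase.mpr ⟨h2, Finset.mem_erase.mpr ⟨h1, hC⟩⟩))

lemma hyp_eq_of_mem (hG : IsMedianGraph G) {h : Set (V × V)} (hh : IsHyperplane G h)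
    {u v : V} (huv : (u, v) ∈ h) : h = ecl G (u, v) := by
  obtain ⟨a, b, hab, rfl⟩ := isHyp_iff.mp hh
  exact ecl_eq_of_mem hG hab huv

lemma mem_swap_hyp (hG : IsMedianGraph G) {h : Set (V × V)} (hh : IsHyperplane G h)
    {u v : V} (huv : (u, v) ∈ h) : (v, u) ∈ h := by
  obtain ⟨a, b, hab, rfl⟩ := isHyp_iff.mp hh
  exact mem_ecl_swap hG hab huv

lemma adj_of_mem_hyp {h : Set (V × V)} (hh : IsHyperplane G h)
    {u v : V} (huv : (u, v) ∈ h) : G.Adj u v := by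
  obtain ⟨a, b, hab, rfl⟩ := isHyp_iff.mp hh
  exact huv.1

lemma wv_finite_card (hG : IsMedianGraph G) {N : ℕ}
    (hN : ∀ v : V, (G.neighborSet v).Finite ∧ (G.neighborSet v).ncard ≤ N) (v : V) :
    (Wv G v).Finite ∧ (Wv G v).ncard ≤ N := by
  have hch : ∀ h ∈ Wv G v, ∃ w, w ∈ G.neighborSet v ∧ (v, w) ∈ h := by
    rintro h ⟨hh, hadj⟩
    obtain ⟨w, hm | hm⟩ := (adjTo_iff v).mp hadj
    · exact ⟨w, adj_of_mem_hyp hh hm, hm⟩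
    · have := mem_swap_hyp hG hh hm
      exact ⟨w, adj_of_mem_hyp hh this, this⟩
  haveI : Nonempty V := ⟨v⟩
  choose! f hf1 hf2 using hch
  have hinj : Set.InjOn f (Wv G v) := by
    intro h1 hh1 h2 hh2 he
    have e1 : h1 = ecl G (v, f h1) := hyp_eq_of_mem hG hh1.1 (hf2 h1 hh1)
    have e2 : h2 = ecl G (v, f h2) := hyp_eq_of_mem hG hh2.1 (hf2 h2 hh2)
    rw [e1, e2, he]
  have himg : f '' Wv G v ⊆ G.neighborSet v := by
    rintro w ⟨h, hh, rfl⟩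
    exact hf1 h hh
  have hfin : (Wv G v).Finite :=
    Set.Finite.of_finite_image (((hN v).1).subset himg) hinj
  refine ⟨hfin, ?_⟩
  calc (Wv G v).ncard = (f '' Wv G v).ncard := (Set.ncard_image_of_injOn hinj).symm
    _ ≤ (G.neighborSet v).ncard := Set.ncard_le_ncard himg (hN v).1
    _ ≤ N := (hN v).2

lemma clique_common (hG : IsMedianGraph G) (hULF : UnifLocFinite G) (v₀ : V)
    {D : Set (Set (V × V))} (hDhyp : ∀ h ∈ D, IsHyperplane G h)
    (hDpair : ∀ h ∈ D, ∀ h' ∈ D, h ≠ h' → Contact G h h') :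
    ∃ u, ∀ h ∈ D, AdjTo G h u := by
  classical
  obtain ⟨N, hN⟩ := hULF
  have key : ∀ t : Finset (Set (V × V)), ↑t ⊆ D → ∃ u, ∀ h ∈ t, AdjTo G h u := by
    intro t ht
    have hconv : ∀ A ∈ t.image (fun h => {w | AdjTo G h w}), Convex G A := by
      intro A hA
      obtain ⟨h, hh, rfl⟩ := Finset.mem_image.mp hA
      intro x y z hx hy hb
      exact carrier_conv' hG (hDhyp h (ht hh)) hx hy hb
    have hpair : ∀ A ∈ t.image (fun h => {w | AdjTo G h w}),
        ∀ B ∈ t.image (fun h => {w | AdjTo G h w}), (A ∩ B).Nonempty := by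
      intro A hA B hB
      obtain ⟨h, hh, rfl⟩ := Finset.mem_image.mp hA
      obtain ⟨h', hh', rfl⟩ := Finset.mem_image.mp hB
      by_cases he : h = h'
      · subst he
        obtain ⟨w, hw⟩ := carrier_nonempty' (hDhyp h (ht hh))
        exact ⟨w, hw, hw⟩
      · obtain ⟨w, hw1, hw2⟩ := hDpair h (ht hh) h' (ht hh') he
        exact ⟨w, hw1, hw2⟩
    obtain ⟨p, hp⟩ := helly hG v₀ _ _ rfl hconv hpair
    exact ⟨p, fun h hh => hp _ (Finset.mem_image_of_mem _ hh)⟩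
  have hfin : D.Finite := by
    by_contra hinf
    obtain ⟨t, htD, htfin, htcard⟩ :=
      Set.Infinite.exists_subset_ncard_eq hinf (N + 1)
    obtain ⟨u, hu⟩ := key htfin.toFinset (by simpa using htD)
    have hsub : t ⊆ Wv G u := fun h hh =>
      ⟨hDhyp h (htD hh), hu h (by simp [Set.Finite.mem_toFinset]; exact hh)⟩
    have hw := wv_finite_card hG hN u
    have hle : t.ncard ≤ (Wv G u).ncard := Set.ncard_le_ncard hsub hw.1
    omega
  obtain ⟨u, hu⟩ := key hfin.toFinset (by simp)
  exact ⟨u, fun h hh => hu h ((Set.Finite.mem_toFinset hfin).mpr hh)⟩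
lemma transverse_aux (hG : IsMedianGraph G) {c d v v₁ u : V} (hcd : G.Adj c d)
    (hvv₁ : G.Adj v v₁) (hv₁u : G.dist v₁ u + 1 = G.dist v u)
    (hvA : Side G c d v)
    (hne : ecl G (c, d) ≠ ecl G (v, v₁))
    (hv : AdjTo G (ecl G (c, d)) v) (hu : AdjTo G (ecl G (c, d)) u) :
    Transverse G (ecl G (v, v₁)) (ecl G (c, d)) := by
  have hv₁ : AdjTo G (ecl G (c, d)) v₁ := by
    refine carrier_conv hG hcd hv hu ?_
    rw [adj_dist hvv₁]; omega
  have hv₁A : Side G c d v₁ := by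
    rcases step hG hcd v₁ with s | s
    · exact s
    · exfalso
      exact hne (hyp_eq_of_mem hG (isHyp_ecl hcd)
        ((mem_ecl_iff hG hcd v v₁).mpr ⟨hvv₁, Or.inl ⟨hvA, s⟩⟩))
  obtain ⟨w, hvw, hws⟩ := (adjTo_ecl_iff hG hcd v).mp hv
  have hwB : Side G d c w := by
    rcases hws with ⟨h1, h2⟩ | ⟨h1, h2⟩
    · exact h2
    · exact absurd h1 fun hh => side_irrefl hvA hh
  obtain ⟨w₁, hv₁w₁, hw₁s⟩ := (adjTo_ecl_iff hG hcd v₁).mp hv₁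
  have hw₁B : Side G d c w₁ := by
    rcases hw₁s with ⟨h1, h2⟩ | ⟨h1, h2⟩
    · exact h2
    · exact absurd h1 fun hh => side_irrefl hv₁A hh
  have hvw₁ : G.dist v w₁ = 2 := by
    have hc := crossDist hG hcd hv₁w₁ hv₁A hw₁B hvA
    rw [adj_dist hvv₁] at hc
    omega
  have hww₁1 : G.dist w w₁ = 1 := by
    have h1 := crossDistB hG hcd hv₁w₁ hv₁A hw₁B hwB
    have h2 := crossDist hG hcd hvw hvA hwB hv₁A
    have c1 : G.dist v₁ v = G.dist v v₁ := SimpleGraph.dist_comm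
    have c2 : G.dist w v₁ = G.dist v₁ w := SimpleGraph.dist_comm
    rw [adj_dist hvv₁] at c1
    omega
  have hww₁ : G.Adj w w₁ := dist_adj hww₁1
  have hd1 : G.dist v v₁ = 1 := adj_dist hvv₁
  have hd2 : G.dist v₁ v = 1 := by rw [SimpleGraph.dist_comm]; exact hd1
  have hd3 : G.dist v v = 0 := by simp
  have hd4 : G.dist v₁ v₁ = 0 := by simp
  have hvA0 : Side G v v₁ v := by unfold Side; omega
  have hv₁B0 : Side G v₁ v v₁ := by unfold Side; omega
  have hwA0 : Side G v v₁ w := by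
    rcases step hG hvv₁ w with s | s
    · exact s
    · exfalso
      have e1 : ecl G (c, d) = ecl G (v, w) := hyp_eq_of_mem hG (isHyp_ecl hcd)
        ((mem_ecl_iff hG hcd v w).mpr ⟨hvw, Or.inl ⟨hvA, hwB⟩⟩)
      have e2 : ecl G (v, v₁) = ecl G (v, w) := hyp_eq_of_mem hG (isHyp_ecl hvv₁)
        ((mem_ecl_iff hG hvv₁ v w).mpr ⟨hvw, Or.inl ⟨hvA0, s⟩⟩)
      exact hne (e1.trans e2.symm)
  have hw₁B0 : Side G v₁ v w₁ := by
    rcases step hG hvv₁ w₁ with s | s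
    · exfalso
      have e1 : ecl G (c, d) = ecl G (v₁, w₁) := hyp_eq_of_mem hG (isHyp_ecl hcd)
        ((mem_ecl_iff hG hcd v₁ w₁).mpr ⟨hv₁w₁, Or.inl ⟨hv₁A, hw₁B⟩⟩)
      have e2 : ecl G (v, v₁) = ecl G (v₁, w₁) := hyp_eq_of_mem hG (isHyp_ecl hvv₁)
        ((mem_ecl_iff hG hvv₁ v₁ w₁).mpr ⟨hv₁w₁, Or.inr ⟨hv₁B0, s⟩⟩)
      exact hne (e1.trans e2.symm)
    · exact s
  refine ⟨v, v₁, w, w₁, mem_ecl_self hvv₁, ?_, ?_, ?_, hvv₁, hww₁, hvw, hv₁w₁⟩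
  · exact (mem_ecl_iff hG hvv₁ w w₁).mpr ⟨hww₁, Or.inl ⟨hwA0, hw₁B0⟩⟩
  · exact (mem_ecl_iff hG hcd v w).mpr ⟨hvw, Or.inl ⟨hvA, hwB⟩⟩
  · exact (mem_ecl_iff hG hcd v₁ w₁).mpr ⟨hv₁w₁, Or.inl ⟨hv₁A, hw₁B⟩⟩

lemma wv_mono_eq (hG : IsMedianGraph G) (hext : ∀ v : V, ¬ LinkIsCone G v)
    {u v : V} (hsub : Wv G v ⊆ Wv G u) : v = u := by
  by_contra hne
  have hdvu : G.dist v u ≠ 0 := fun h => hne (dz hG h)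
  obtain ⟨n', hn'⟩ : ∃ n', G.dist v u = n' + 1 := ⟨G.dist v u - 1, by omega⟩
  obtain ⟨v₁, hvv₁, hv₁u⟩ := exists_next hG hn'
  have hh₀hyp : IsHyperplane G (ecl G (v, v₁)) := isHyp_ecl hvv₁
  have hh₀v : AdjTo G (ecl G (v, v₁)) v := carrier_nonempty hvv₁
  refine hext v ⟨ecl G (v, v₁), ⟨hh₀hyp, hh₀v⟩, ?_⟩
  intro h' hmem' hne'
  obtain ⟨hh'hyp, hh'v⟩ := hmem'
  have hh'u : AdjTo G h' u := (hsub ⟨hh'hyp, hh'v⟩).2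
  obtain ⟨c, d, hcd, rfl⟩ := isHyp_iff.mp hh'hyp
  have hbetu : G.dist v₁ u + 1 = G.dist v u := by omega
  rcases step hG hcd v with hvA | hvA
  · exact transverse_aux hG hcd hvv₁ hbetu hvA hne' hh'v hh'u
  · rw [ecl_comm c d] at hne' hh'v hh'u ⊢
    exact transverse_aux hG (G.adj_symm hcd) hvv₁ hbetu hvA hne' hh'v hh'u
lemma iso_dist (hG : IsMedianGraph G) (φ : G ≃g G) (x y : V) :
    G.dist (φ x) (φ y) = G.dist x y := by
  have key : ∀ (σ : G ≃g G) (x y : V), G.dist (σ x) (σ y) ≤ G.dist x y := by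
    intro σ x y
    obtain ⟨p, hp⟩ := hG.1.exists_walk_length_eq_dist x y
    have hd := SimpleGraph.dist_le (p.map σ.toHom)
    rwa [SimpleGraph.Walk.length_map, hp] at hd
  refine le_antisymm (key φ x y) ?_
  have h2 := key φ.symm (φ x) (φ y)
  simpa using h2

lemma hmap_ecl (hG : IsMedianGraph G) (φ : G ≃g G) (a b : V) :
    hmap G φ (ecl G (a, b)) = ecl G (φ a, φ b) := by
  have hsd : ∀ x y : V, G.dist x (φ.symm y) = G.dist (φ x) y := by
    intro x y
    rw [← iso_dist hG φ x (φ.symm y), RelIso.apply_symm_apply]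
  ext ⟨u, v⟩
  constructor
  · rintro ⟨⟨p, q⟩, ⟨hadj, hth⟩, he⟩
    have he' : (φ p, φ q) = (u, v) := he
    injection he' with he1 he2
    subst he1
    subst he2
    refine ⟨φ.map_rel_iff.mpr hadj, ?_⟩
    show G.dist (φ a) (φ p) + G.dist (φ b) (φ q) ≠ G.dist (φ a) (φ q) + G.dist (φ b) (φ p)
    rw [iso_dist hG φ, iso_dist hG φ, iso_dist hG φ, iso_dist hG φ]
    exact hth
  · rintro ⟨hadj, hth⟩
    refine ⟨(φ.symm u, φ.symm v), ⟨φ.symm.map_rel_iff.mpr hadj, ?_⟩, by simp⟩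
    show G.dist a (φ.symm u) + G.dist b (φ.symm v) ≠
      G.dist a (φ.symm v) + G.dist b (φ.symm u)
    rw [hsd, hsd, hsd, hsd]
    exact hth

lemma isHyp_hmap (hG : IsMedianGraph G) (φ : G ≃g G) {h : Set (V × V)}
    (hh : IsHyperplane G h) : IsHyperplane G (hmap G φ h) := by
  obtain ⟨a, b, hab, rfl⟩ := isHyp_iff.mp hh
  rw [hmap_ecl hG φ]
  exact isHyp_ecl (φ.map_rel_iff.mpr hab)

lemma hmap_symm_apply (φ : G ≃g G) (h : Set (V × V)) :
    hmap G φ.symm (hmap G φ h) = h := by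
  unfold hmap
  rw [← Set.image_comp]
  have hid : ((fun e : V × V => (φ.symm e.1, φ.symm e.2)) ∘
      (fun e : V × V => (φ e.1, φ e.2))) = id := by
    funext e; simp
  rw [hid, Set.image_id]

lemma adjTo_hmap (φ : G ≃g G) {h : Set (V × V)} (x : V) :
    AdjTo G (hmap G φ h) (φ x) ↔ AdjTo G h x := by
  constructor
  · rintro ⟨⟨p, q⟩, ⟨⟨p', q'⟩, hm, he⟩, hend⟩
    have he' : (φ p', φ q') = (p, q) := he
    injection he' with h1 h2
    have hend' : p = φ x ∨ q = φ x := hend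
    rcases hend' with hend' | hend'
    · exact ⟨(p', q'), hm, Or.inl (φ.toEquiv.injective (h1.trans hend'))⟩
    · exact ⟨(p', q'), hm, Or.inr (φ.toEquiv.injective (h2.trans hend'))⟩
  · rintro ⟨e, hm, hend⟩
    refine ⟨(φ e.1, φ e.2), ⟨e, hm, rfl⟩, ?_⟩
    rcases hend with hend | hend
    · exact Or.inl (by rw [hend])
    · exact Or.inr (by rw [hend])

lemma wv_hmap (hG : IsMedianGraph G) (φ : G ≃g G) (v : V) :
    hmap G φ '' Wv G v = Wv G (φ v) := by
  ext h'
  constructor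
  · rintro ⟨h, ⟨hhyp, hadj⟩, rfl⟩
    exact ⟨isHyp_hmap hG φ hhyp, (adjTo_hmap φ v).mpr hadj⟩
  · rintro ⟨hhyp, hadj⟩
    refine ⟨hmap G φ.symm h', ⟨isHyp_hmap hG φ.symm hhyp, ?_⟩, ?_⟩
    · have h2 := (adjTo_hmap φ.symm (φ v)).mpr hadj
      rwa [RelIso.symm_apply_apply] at h2
    · have h3 := hmap_symm_apply φ.symm h'
      have hss : φ.symm.symm = φ := rfl
      rwa [hss] at h3

/-- The set of hyperplanes (as elements of `Hyp G`) adjacent to `v`. -/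
def WvS (G : SimpleGraph V) (v : V) : Set (Hyp G) := {h | AdjTo G h.1 v}

lemma wvs_mono (hG : IsMedianGraph G) (hext : ∀ v : V, ¬ LinkIsCone G v)
    {u v : V} (hsub : WvS G v ⊆ WvS G u) : v = u := by
  refine wv_mono_eq hG hext ?_
  rintro h ⟨hhyp, hadj⟩
  exact ⟨hhyp, hsub (show (⟨h, hhyp⟩ : Hyp G) ∈ WvS G v from hadj)⟩

lemma clique_common_S (hG : IsMedianGraph G) (hULF : UnifLocFinite G) (v₀ : V)
    {D : Set (Hyp G)} (hpair : ∀ h ∈ D, ∀ h' ∈ D, h ≠ h' → Contact G h.1 h'.1) :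
    ∃ u, D ⊆ WvS G u := by
  have hcc := clique_common hG hULF v₀ (D := Subtype.val '' D) ?_ ?_
  · obtain ⟨u, hu⟩ := hcc
    exact ⟨u, fun h hh => hu h.1 ⟨h, hh, rfl⟩⟩
  · rintro h ⟨k, hk, rfl⟩
    exact k.2
  · rintro h ⟨k, hk, rfl⟩ h' ⟨k', hk', rfl⟩ hne
    exact hpair k hk k' hk' fun he => hne (congrArg Subtype.val he)

lemma image_clique (ψ : contactGraph G ≃g contactGraph G) {v : V} :
    ∀ h ∈ (fun k => ψ k) '' WvS G v, ∀ h' ∈ (fun k => ψ k) '' WvS G v,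
      h ≠ h' → Contact G h.1 h'.1 := by
  rintro h ⟨k, hk, rfl⟩ h' ⟨k', hk', rfl⟩ hne
  have hkne : k ≠ k' := fun he => hne (congrArg _ he)
  have hadj : (contactGraph G).Adj k k' := ⟨hkne, v, hk, hk'⟩
  exact (ψ.map_rel_iff.mpr hadj).2

lemma image_wvs (hG : IsMedianGraph G) (hULF : UnifLocFinite G)
    (hext : ∀ v : V, ¬ LinkIsCone G v)
    (ψ : contactGraph G ≃g contactGraph G) (v : V) :
    ∃! u, (fun k => ψ k) '' WvS G v = WvS G u := by
  obtain ⟨u, hu⟩ := clique_common_S hG hULF v (image_clique ψ (v := v))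
  obtain ⟨t, ht⟩ := clique_common_S hG hULF v (image_clique ψ.symm (v := u))
  have h1 : WvS G v ⊆ WvS G t := by
    intro k hk
    have h2 : ψ k ∈ WvS G u := hu ⟨k, hk, rfl⟩
    have h3 : ψ.symm (ψ k) ∈ WvS G t := ht ⟨ψ k, h2, rfl⟩
    rwa [RelIso.symm_apply_apply] at h3
  have htv : v = t := wvs_mono hG hext h1
  subst htv
  have h4 : (fun k => ψ k) '' WvS G v = WvS G u := by
    refine Set.Subset.antisymm hu ?_
    intro k hk
    exact ⟨ψ.symm k, ht ⟨k, hk, rfl⟩, by simp⟩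
  refine ⟨u, h4, ?_⟩
  intro y hy
  refine wvs_mono hG hext ?_
  rw [← hy, ← h4]

lemma realize_image (hG : IsMedianGraph G) (φ : G ≃g G)
    (ψ : contactGraph G ≃g contactGraph G)
    (hreal : ∀ h : Hyp G, (ψ h).1 = hmap G φ h.1) (v : V) :
    (fun k => ψ k) '' WvS G v = WvS G (φ v) := by
  ext k
  constructor
  · rintro ⟨k₀, hk₀, rfl⟩
    show AdjTo G (ψ k₀).1 (φ v)
    rw [hreal k₀]
    exact (adjTo_hmap φ v).mpr hk₀
  · intro hk
    refine ⟨ψ.symm k, ?_, by simp⟩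
    show AdjTo G (ψ.symm k).1 v
    have h1 : k.1 = hmap G φ (ψ.symm k).1 := by
      have h0 := hreal (ψ.symm k)
      rwa [RelIso.apply_symm_apply] at h0
    have h2 : AdjTo G (hmap G φ (ψ.symm k).1) (φ v) := by rw [← h1]; exact hk
    exact (adjTo_hmap φ v).mp h2

end MedianDev

open MedianDev

/-- for `X` uniformly locally finite with no extremal vertices, the natural
map `ι : Aut(X) → Aut(𝒞(X))` is injective, and there is a homomorphism
`ρ : Aut(𝒞(X)) → Sym(X⁰)` with `ρ ∘ ι = id`. -/
theorem iota_injective_and_rho (G : SimpleGraph V) (hG : IsMedianGraph G)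
    (hULF : UnifLocFinite G) (hext : ∀ v : V, ¬ LinkIsCone G v) :
    (∀ φ ψ : G ≃g G, (∀ h, IsHyperplane G h → hmap G φ h = hmap G ψ h) → φ = ψ) ∧
    ∃ ρ : (contactGraph G ≃g contactGraph G) → Equiv.Perm V,
      (∀ ψ₁ ψ₂ : contactGraph G ≃g contactGraph G, ρ (ψ₁.trans ψ₂) = ρ ψ₂ * ρ ψ₁) ∧
      (∀ (φ : G ≃g G) (ψ : contactGraph G ≃g contactGraph G),
        (∀ h : Hyp G, (ψ h).1 = hmap G φ h.1) → ∀ v : V, ρ ψ v = φ v) := by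
  classical
  constructor
  · intro φ ψ hsame
    refine RelIso.ext fun v => ?_
    have h1 : hmap G φ '' Wv G v = hmap G ψ '' Wv G v :=
      Set.image_congr fun h hh => hsame h hh.1
    have h2 : Wv G (φ v) = Wv G (ψ v) := by
      rw [← wv_hmap hG φ v, ← wv_hmap hG ψ v, h1]
    exact wv_mono_eq hG hext h2.subset
  · have key := fun (ψ : contactGraph G ≃g contactGraph G) (v : V) =>
      image_wvs hG hULF hext ψ v
    choose f hP hU using key
    have hinv : ∀ (ψ : contactGraph G ≃g contactGraph G) (v : V), f ψ.symm (f ψ v) = v := by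
      intro ψ v
      refine (hU ψ.symm (f ψ v) v ?_).symm
      rw [← hP ψ v, Set.image_image]
      simp
    refine ⟨fun ψ =>
      { toFun := f ψ
        invFun := f ψ.symm
        left_inv := hinv ψ
        right_inv := fun v => by
          have h0 := hinv ψ.symm v
          have hss : ψ.symm.symm = ψ := rfl
          rwa [hss] at h0 }, ?_, ?_⟩
    · intro ψ₁ ψ₂
      ext v
      simp only [Equiv.Perm.mul_apply]
      show f (ψ₁.trans ψ₂) v = f ψ₂ (f ψ₁ v)
      refine (hU (ψ₁.trans ψ₂) v (f ψ₂ (f ψ₁ v)) ?_).symm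
      have h1 : (fun k => (ψ₁.trans ψ₂) k) '' WvS G v
          = (fun k => ψ₂ k) '' ((fun k => ψ₁ k) '' WvS G v) := by
        rw [Set.image_image]
        rfl
      rw [h1, hP ψ₁ v, hP ψ₂ (f ψ₁ v)]
    · intro φ ψ hreal v
      show f ψ v = φ v
      exact (hU ψ v (φ v) (realize_image hG φ ψ hreal v)).symm
end

section
/- Let X be a CAT(0) cube complex and for hyperplanes u, w define u ∈ I⁰(w) iff u ∈ I(w) and w ∈ I(u), equivalently u and w have the same carrier. Then: (a) if u ∈ I⁰(w), then u and w have the same star in the contact graph C(X); (b) u ∈ I⁰(w) iff I⁰(u) = I⁰(w), so the sets I⁰(w) partition the hyperplanes of X. -/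
open SimpleGraph

variable {V : Type*}

/-- (a) hyperplanes in `I⁰(w)` have the same star as `w` in the contact
graph; (b) `u ∈ I⁰(w)` iff `I⁰(u) = I⁰(w)`, so the sets `I⁰(w)` partition the
hyperplanes. -/
theorem Ical0_star_and_partition (G : SimpleGraph V) (hG : IsMedianGraph G)
    (w u : Set (V × V)) (hw : IsHyperplane G w) (hu : IsHyperplane G u) :
    (u ∈ Ical0 G w → ∀ t, IsHyperplane G t → (Contact G u t ↔ Contact G w t)) ∧
    (u ∈ Ical0 G w ↔ Ical0 G u = Ical0 G w) ∧
    (w ∈ Ical0 G w) ∧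
    (Ical0 G u = Ical0 G w ∨ Disjoint (Ical0 G u) (Ical0 G w)) := by
  have key : ∀ a b : Set (V × V), IsHyperplane G a → IsHyperplane G b →
      (a ∈ Ical0 G b ↔ ∀ v, AdjTo G a v ↔ AdjTo G b v) := by
    intro a b ha hb
    constructor
    · rintro ⟨⟨-, h1⟩, ⟨-, h2⟩⟩ v
      exact ⟨h2 v, h1 v⟩
    · intro h
      exact ⟨⟨ha, fun v hv => (h v).mpr hv⟩, ⟨hb, fun v hv => (h v).mp hv⟩⟩
  have iff_eq : u ∈ Ical0 G w ↔ Ical0 G u = Ical0 G w := by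
    constructor
    · intro huw
      have h := (key u w hu hw).mp huw
      ext x
      constructor
      · intro hx
        have hxh : IsHyperplane G x := hx.1.1
        exact (key x w hxh hw).mpr fun v => ((key x u hxh hu).mp hx v).trans (h v)
      · intro hx
        have hxh : IsHyperplane G x := hx.1.1
        exact (key x u hxh hu).mpr fun v =>
          ((key x w hxh hw).mp hx v).trans (h v).symm
    · intro heq
      have : u ∈ Ical0 G u := (key u u hu hu).mpr fun v => Iff.rfl
      rwa [heq] at this
  refine ⟨?_, iff_eq, (key w w hw hw).mpr fun v => Iff.rfl, ?_⟩
  · intro huw t ht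
    have h := (key u w hu hw).mp huw
    constructor
    · rintro ⟨v, hv, hv'⟩
      exact ⟨v, (h v).mp hv, hv'⟩
    · rintro ⟨v, hv, hv'⟩
      exact ⟨v, (h v).mpr hv, hv'⟩
  · by_cases hd : Disjoint (Ical0 G u) (Ical0 G w)
    · exact Or.inr hd
    · left
      rw [Set.not_disjoint_iff] at hd
      obtain ⟨x, hxu, hxw⟩ := hd
      have hxh : IsHyperplane G x := hxu.1.1
      have h1 := (key x u hxh hu).mp hxu
      have h2 := (key x w hxh hw).mp hxw
      exact iff_eq.mp ((key u w hu hw).mpr fun v => (h1 v).symm.trans (h2 v))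
end

section
/- Let X be a uniformly locally finite CAT(0) cube complex with no extremal vertices, and let ρ : Aut(C(X)) → Sym(X^(0)) be the homomorphism induced by the action on maximal cliques. Then the kernel of ρ equals the subgroup N of permutations of the hyperplane set that preserve adjacency in C(X) and leave each set I⁰(w) invariant; moreover N is isomorphic to the direct product over the partition classes I⁰(w) of the symmetric groups Sym(I⁰(w)). In particular, ρ is injective if and only if every I⁰(w) is a singleton. -/
open SimpleGraph

variable {V : Type*}

namespace MedianDev

variable {G : SimpleGraph V}

lemma deq0 (hG : IsMedianGraph G) {p q : V} (h : G.dist p q = 0) : p = q :=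
  hG.1.dist_eq_zero_iff.mp h

lemma dadj {p q : V} (h : G.Adj p q) : G.dist p q = 1 :=
  dist_eq_one_iff_adj.mpr h

lemma adj_of_d1 {p q : V} (h : G.dist p q = 1) : G.Adj p q :=
  dist_eq_one_iff_adj.mp h

lemma dcomm (p q : V) : G.dist p q = G.dist q p := dist_comm

lemma dtri (hG : IsMedianGraph G) (p q r : V) : G.dist p r ≤ G.dist p q + G.dist q r :=
  hG.1.dist_triangle

/-- In a median graph, distances to the two endpoints of an edge differ by exactly one. -/
lemma dsucc (hG : IsMedianGraph G) {a b : V} (hab : G.Adj a b) (x : V) :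
    G.dist a x + 1 = G.dist b x ∨ G.dist b x + 1 = G.dist a x := by
  obtain ⟨m, ⟨m1, m2, m3⟩, -⟩ := hG.2 x a b
  have hab1 : G.dist a b = 1 := dadj hab
  have hc : G.dist a m = G.dist m a := dcomm _ _
  rcases (by omega : G.dist a m = 0 ∨ G.dist m b = 0) with h | h
  · have hm : a = m := deq0 hG h
    rw [← hm] at m1 m2 m3
    have e1 : G.dist a x = G.dist x a := dcomm _ _
    have e2 : G.dist b x = G.dist x b := dcomm _ _
    omega
  · have hm : m = b := deq0 hG h
    rw [hm] at m1 m2 m3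
    have e1 : G.dist a x = G.dist x a := dcomm _ _
    have e2 : G.dist b x = G.dist x b := dcomm _ _
    have e3 : G.dist b a = G.dist a b := dcomm _ _
    have e4 : G.dist a b = 1 := hab1
    omega

lemma no_triangle (hG : IsMedianGraph G) {a b c : V}
    (hab : G.Adj a b) (hbc : G.Adj b c) (hac : G.Adj a c) : False := by
  have h1 : G.dist a c = 1 := dadj hac
  have h2 : G.dist b c = 1 := dadj hbc
  rcases dsucc hG hab c with h | h <;> omega

lemma dist_two (hG : IsMedianGraph G) {p q : V} (hne : p ≠ q) (hnadj : ¬ G.Adj p q)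
    (hle : G.dist p q ≤ 2) : G.dist p q = 2 := by
  have h0 : G.dist p q ≠ 0 := fun h => hne (deq0 hG h)
  have h1 : G.dist p q ≠ 1 := fun h => hnadj (adj_of_d1 h)
  omega

lemma exists_first_step (hG : IsMedianGraph G) {a b : V} (h : a ≠ b) :
    ∃ c, G.Adj a c ∧ G.dist c b + 1 = G.dist a b := by
  have h1 : G.dist a b ≠ 0 := by
    intro h0; exact h (deq0 hG h0)
  obtain ⟨p, hp⟩ := hG.1.exists_walk_length_eq_dist a b
  cases p with
  | nil => exact absurd rfl h
  | @cons _ c _ hadj q =>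
    refine ⟨c, hadj, ?_⟩
    have h2 : G.dist c b ≤ q.length := dist_le q
    have h3 : G.dist a b ≤ G.dist a c + G.dist c b := dtri hG a c b
    have h4 : G.dist a c = 1 := dadj hadj
    have h5 : q.length + 1 = G.dist a b := by
      simpa [SimpleGraph.Walk.length_cons] using hp
    omega

end MedianDev

namespace MedianDev
variable {G : SimpleGraph V}

/-- halfspace coherence across a square -/
lemma square_half_aux (hG : IsMedianGraph G) {a a' b b' : V}
    (haa' : G.Adj a a') (hbb' : G.Adj b b') (hab : G.Adj a b) (ha'b' : G.Adj a' b')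
    (h2 : G.dist a b' = 2) (h2' : G.dist a' b = 2)
    (x : V) (hx : G.dist x a < G.dist x a') : G.dist x b < G.dist x b' := by
  have F1 := dsucc hG haa' x
  have F2 := dsucc hG hbb' x
  have F3 := dsucc hG hab x
  have F4 := dsucc hG ha'b' x
  have c1 : G.dist a x = G.dist x a := dcomm _ _
  have c2 : G.dist a' x = G.dist x a' := dcomm _ _
  have c3 : G.dist b x = G.dist x b := dcomm _ _
  have c4 : G.dist b' x = G.dist x b' := dcomm _ _
  by_contra hcon
  push_neg at hcon
  have ha' : G.dist x a' = G.dist x a + 1 := by omega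
  have hb : G.dist x b = G.dist x a + 1 := by omega
  have hb' : G.dist x b' = G.dist x a := by omega
  rcases Nat.eq_zero_or_pos (G.dist x a) with h0 | hpos
  · have : x = a := deq0 hG h0
    subst this
    have : G.dist x b' = 0 := by omega
    have : x = b' := deq0 hG this
    subst this
    omega
  · -- median of x, a, b'
    obtain ⟨μ, ⟨m1, m2, m3⟩, -⟩ := hG.2 x a b'
    have hμc : G.dist a μ = G.dist μ a := dcomm _ _
    have hμa : G.dist μ a = 1 := by omega
    have hμb' : G.dist μ b' = 1 := by omega
    have hxμ : G.dist x μ = G.dist x a - 1 := by omega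
    have hadjμa : G.Adj μ a := adj_of_d1 hμa
    have hadjμb' : G.Adj μ b' := adj_of_d1 hμb'
    -- dist μ a' = 2
    have hμa' : G.dist μ a' = 2 := by
      refine dist_two hG ?_ ?_ ?_
      · intro h; subst h; omega
      · intro h; exact no_triangle hG hadjμa haa' h
      · have := dtri hG μ a a'
        have := dadj haa'
        omega
    have hμb : G.dist μ b = 2 := by
      refine dist_two hG ?_ ?_ ?_
      · intro h; subst h; omega
      · intro h; exact no_triangle hG hadjμa hab h
      · have := dtri hG μ a b
        have := dadj hab
        omega
    -- a and b' are both medians of (μ, a', b)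
    obtain ⟨m0, -, huniq⟩ := hG.2 μ a' b
    have hua : a = m0 := by
      refine huniq a ⟨?_, ?_, ?_⟩
      · have : G.dist a a' = 1 := dadj haa'
        omega
      · have : G.dist a b = 1 := dadj hab
        omega
      · have e1 : G.dist a' a = 1 := dadj haa'.symm
        have e2 : G.dist a b = 1 := dadj hab
        omega
    have hub' : b' = m0 := by
      refine huniq b' ⟨?_, ?_, ?_⟩
      · have : G.dist b' a' = 1 := dadj ha'b'.symm
        omega
      · have : G.dist b' b = 1 := dadj hbb'.symm
        omega
      · have e1 : G.dist a' b' = 1 := dadj ha'b'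
        have e2 : G.dist b' b = 1 := dadj hbb'.symm
        omega
    have hco : a = b' := hua.trans hub'.symm
    rw [hco] at h2
    simp [SimpleGraph.dist_self] at h2

end MedianDev

namespace MedianDev
variable {G : SimpleGraph V}

lemma ladder_step (hG : IsMedianGraph G) {m : ℕ} {a a' b b' : V}
    (haa' : G.Adj a a') (hbb' : G.Adj b b')
    (d1 : G.dist a b = m + 1) (d2 : G.dist a' b' = m + 1)
    (d3 : G.dist a b' = m + 2) (d4 : G.dist a' b = m + 2) :
    ∃ c c', G.Adj b c ∧ G.Adj b' c' ∧ G.Adj c c' ∧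
      G.dist a c = m ∧ G.dist a' c' = m ∧ G.dist a c' = m + 1 ∧ G.dist a' c = m + 1 ∧
      G.dist c b' = 2 ∧ G.dist c' b = 2 := by
  have hba : b ≠ a := by
    intro h; subst h
    simp [SimpleGraph.dist_self] at d1
  obtain ⟨c, hbc, hc⟩ := exists_first_step hG hba
  have e1 : G.dist b a = m + 1 := (dcomm b a).trans d1
  have hca : G.dist c a = m := by omega
  have hac : G.dist a c = m := (dcomm a c).trans hca
  have ha'a : G.dist a' a = 1 := dadj haa'.symm
  have ha'c : G.dist a' c = m + 1 := by
    have t1 : G.dist a' c ≤ G.dist a' a + G.dist a c := dtri hG a' a c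
    have t2 : G.dist a' b ≤ G.dist a' c + G.dist c b := dtri hG a' c b
    have hcb : G.dist c b = 1 := dadj hbc.symm
    omega
  have hcb' : G.dist c b' = 2 := by
    have t1 : G.dist a b' ≤ G.dist a c + G.dist c b' := dtri hG a c b'
    have t2 : G.dist c b' ≤ G.dist c b + G.dist b b' := dtri hG c b b'
    have hcb : G.dist c b = 1 := dadj hbc.symm
    have hbb : G.dist b b' = 1 := dadj hbb'
    omega
  -- median of (a', c, b')
  obtain ⟨c', ⟨m1, m2, m3⟩, -⟩ := hG.2 a' c b'
  have hcm : G.dist c c' = G.dist c' c := dcomm _ _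
  have hc'c : G.dist c' c = 1 := by omega
  have hc'b' : G.dist c' b' = 1 := by omega
  have ha'c' : G.dist a' c' = m := by omega
  have hadjcc' : G.Adj c c' := adj_of_d1 (hcm.trans hc'c)
  have hadjb'c' : G.Adj b' c' := (adj_of_d1 hc'b').symm
  have hac' : G.dist a c' = m + 1 := by
    have t1 : G.dist a c' ≤ G.dist a c + G.dist c c' := dtri hG a c c'
    have t2 : G.dist a b' ≤ G.dist a c' + G.dist c' b' := dtri hG a c' b'
    omega
  have hc'b : G.dist c' b = 2 := by
    have t1 : G.dist c' b ≤ G.dist c' c + G.dist c b := dtri hG c' c b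
    have t2 : G.dist a' b ≤ G.dist a' c' + G.dist c' b := dtri hG a' c' b
    have hcb : G.dist c b = 1 := dadj hbc.symm
    omega
  exact ⟨c, c', hbc, hadjb'c', hadjcc', hac, ha'c', hac', ha'c, hcb', hc'b⟩

lemma rect_half_aux (hG : IsMedianGraph G) :
    ∀ m : ℕ, ∀ a a' b b' x : V, G.Adj a a' → G.Adj b b' →
    G.dist a b = m → G.dist a' b' = m → G.dist a b' = m + 1 → G.dist a' b = m + 1 →
    G.dist x a < G.dist x a' → G.dist x b < G.dist x b' := by
  intro m
  induction m with
  | zero =>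
    intro a a' b b' x haa' hbb' d1 d2 d3 d4 hx
    have : a = b := deq0 hG d1
    subst this
    have : a' = b' := deq0 hG d2
    subst this
    exact hx
  | succ m ih =>
    intro a a' b b' x haa' hbb' d1 d2 d3 d4 hx
    obtain ⟨c, c', hbc, hb'c', hcc', hac, ha'c', hac', ha'c, hcb', hc'b⟩ :=
      ladder_step hG haa' hbb' d1 d2 d3 d4
    have hxc : G.dist x c < G.dist x c' :=
      ih a a' c c' x haa' hcc' hac ha'c' hac' ha'c hx
    exact square_half_aux hG hcc' hbb' hbc.symm hb'c'.symm hcb' hc'b x hxc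

lemma rect_half (hG : IsMedianGraph G) {m : ℕ} {a a' b b' : V}
    (haa' : G.Adj a a') (hbb' : G.Adj b b')
    (d1 : G.dist a b = m) (d2 : G.dist a' b' = m)
    (d3 : G.dist a b' = m + 1) (d4 : G.dist a' b = m + 1) (x : V) :
    (G.dist x a < G.dist x a' ↔ G.dist x b < G.dist x b') := by
  constructor
  · exact fun h => rect_half_aux hG m a a' b b' x haa' hbb' d1 d2 d3 d4 h
  · intro h
    have F1 := dsucc hG haa' x
    have F2 := dsucc hG hbb' x
    have c1 : G.dist a x = G.dist x a := dcomm _ _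
    have c2 : G.dist a' x = G.dist x a' := dcomm _ _
    have c3 : G.dist b x = G.dist x b := dcomm _ _
    have c4 : G.dist b' x = G.dist x b' := dcomm _ _
    by_contra hcon
    have hswap : G.dist x b' < G.dist x b := by
      have := rect_half_aux hG m a' a b' b x haa'.symm hbb'.symm d2 d1 d4 d3 (by omega)
      omega
    omega

end MedianDev

namespace MedianDev
variable {G : SimpleGraph V}

lemma theta_char (hG : IsMedianGraph G) {e f : V × V}
    (he : G.Adj e.1 e.2) (hf : G.Adj f.1 f.2) :
    Theta G e f ↔ ((G.dist e.1 f.1 < G.dist e.2 f.1 ∧ ¬(G.dist e.1 f.2 < G.dist e.2 f.2)) ∨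
      (¬(G.dist e.1 f.1 < G.dist e.2 f.1) ∧ G.dist e.1 f.2 < G.dist e.2 f.2)) := by
  have F1 := dsucc hG he f.1
  have F2 := dsucc hG he f.2
  have F3 := dsucc hG hf e.1
  have F4 := dsucc hG hf e.2
  have c1 : G.dist f.1 e.1 = G.dist e.1 f.1 := dcomm _ _
  have c2 : G.dist f.2 e.1 = G.dist e.1 f.2 := dcomm _ _
  have c3 : G.dist f.1 e.2 = G.dist e.2 f.1 := dcomm _ _
  have c4 : G.dist f.2 e.2 = G.dist e.2 f.2 := dcomm _ _
  unfold Theta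
  omega

lemma theta_self {e : V × V} (he : G.Adj e.1 e.2) : Theta G e e := by
  have h1 : G.dist e.1 e.1 = 0 := SimpleGraph.dist_self
  have h2 : G.dist e.2 e.2 = 0 := SimpleGraph.dist_self
  have h3 : G.dist e.1 e.2 = 1 := dadj he
  unfold Theta
  omega

lemma theta_swap {e : V × V} {p q : V} (h : Theta G e (p, q)) : Theta G e (q, p) := by
  unfold Theta at h ⊢
  simp only at h ⊢
  omega

/-- Theta edges determine the same wall: theta transfer. -/
lemma theta_trans (hG : IsMedianGraph G) {e f : V × V}
    (he : G.Adj e.1 e.2) (hf : G.Adj f.1 f.2) (hef : Theta G e f) :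
    ∀ g : V × V, G.Adj g.1 g.2 → (Theta G e g ↔ Theta G f g) := by
  intro g hg
  have hchar := (theta_char hG he hf).mp hef
  have F3 := dsucc hG hf e.1
  have F4 := dsucc hG hf e.2
  have c1 : G.dist f.1 e.1 = G.dist e.1 f.1 := dcomm _ _
  have c2 : G.dist f.2 e.1 = G.dist e.1 f.2 := dcomm _ _
  have c3 : G.dist f.1 e.2 = G.dist e.2 f.1 := dcomm _ _
  have c4 : G.dist f.2 e.2 = G.dist e.2 f.2 := dcomm _ _
  have F1 := dsucc hG he f.1
  have F2 := dsucc hG he f.2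
  rw [theta_char hG he hg, theta_char hG hf hg]
  have G1 := dsucc hG he g.1
  have G2 := dsucc hG he g.2
  have G3 := dsucc hG hf g.1
  have G4 := dsucc hG hf g.2
  have b1 : G.dist g.1 e.1 = G.dist e.1 g.1 := dcomm _ _
  have b2 : G.dist g.1 e.2 = G.dist e.2 g.1 := dcomm _ _
  have b3 : G.dist g.2 e.1 = G.dist e.1 g.2 := dcomm _ _
  have b4 : G.dist g.2 e.2 = G.dist e.2 g.2 := dcomm _ _
  have b5 : G.dist g.1 f.1 = G.dist f.1 g.1 := dcomm _ _
  have b6 : G.dist g.1 f.2 = G.dist f.2 g.1 := dcomm _ _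
  have b7 : G.dist g.2 f.1 = G.dist f.1 g.2 := dcomm _ _
  have b8 : G.dist g.2 f.2 = G.dist f.2 g.2 := dcomm _ _
  rcases hchar with ⟨h1, h2⟩ | ⟨h1, h2⟩
  · -- f.1 on e.1 side, f.2 on e.2 side: rect (e.1, e.2, f.1, f.2)
    have R1 := rect_half hG (m := G.dist e.1 f.1) he hf
      rfl (by omega) (by omega) (by omega) g.1
    have R2 := rect_half hG (m := G.dist e.1 f.1) he hf
      rfl (by omega) (by omega) (by omega) g.2
    omega
  · -- f.2 on e.1 side, f.1 on e.2 side: rect (e.1, e.2, f.2, f.1)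
    have R1 := rect_half hG (m := G.dist e.1 f.2) he hf.symm
      rfl (by omega) (by omega) (by omega) g.1
    have R2 := rect_half hG (m := G.dist e.1 f.2) he hf.symm
      rfl (by omega) (by omega) (by omega) g.2
    omega

end MedianDev

namespace MedianDev
variable {G : SimpleGraph V}

lemma theta_mk {p q r s : V} :
    Theta G (p, q) (r, s) ↔ G.dist p r + G.dist q s ≠ G.dist p s + G.dist q r := Iff.rfl

lemma theta_symm {e f : V × V} (h : Theta G e f) : Theta G f e := by
  unfold Theta at h ⊢
  have c1 : G.dist f.1 e.1 = G.dist e.1 f.1 := dcomm _ _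
  have c2 : G.dist f.2 e.2 = G.dist e.2 f.2 := dcomm _ _
  have c3 : G.dist f.1 e.2 = G.dist e.2 f.1 := dcomm _ _
  have c4 : G.dist f.2 e.1 = G.dist e.1 f.2 := dcomm _ _
  omega

lemma theta_char' (hG : IsMedianGraph G) {p q r s : V} (h1 : G.Adj p q) (h2 : G.Adj r s) :
    Theta G (p, q) (r, s) ↔
      ((G.dist p r < G.dist q r ∧ ¬(G.dist p s < G.dist q s)) ∨
       (¬(G.dist p r < G.dist q r) ∧ G.dist p s < G.dist q s)) :=
  theta_char hG (e := (p, q)) (f := (r, s)) h1 h2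

lemma theta_trans' (hG : IsMedianGraph G) {p q r s : V}
    (h1 : G.Adj p q) (h2 : G.Adj r s) (h12 : Theta G (p, q) (r, s)) {g : V × V}
    (hg : G.Adj g.1 g.2) : Theta G (p, q) g ↔ Theta G (r, s) g :=
  theta_trans hG (e := (p, q)) (f := (r, s)) h1 h2 h12 g hg

/-- the Theta-class of an edge, as a hyperplane -/
def cls (G : SimpleGraph V) (e : V × V) : Set (V × V) :=
  {f | G.Adj f.1 f.2 ∧ Theta G e f}

lemma cls_eq (hG : IsMedianGraph G) {e f : V × V}
    (he : G.Adj e.1 e.2) (hf : G.Adj f.1 f.2) (hef : Theta G e f) :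
    cls G e = cls G f :=
  Set.ext fun g => and_congr_right fun hg => theta_trans hG he hf hef g hg

lemma cls_swap {e : V × V} {p q : V} (h : (p, q) ∈ cls G e) : (q, p) ∈ cls G e :=
  ⟨h.1.symm, theta_swap h.2⟩

lemma transverse_of_sep (hG : IsMedianGraph G) {v v₁ : V} (hvv₁ : G.Adj v v₁) :
    ∀ m : ℕ, ∀ a a' b b' : V, G.Adj a a' → G.Adj b b' →
    G.dist a b = m → G.dist a' b' = m → G.dist a b' = m + 1 → G.dist a' b = m + 1 →
    G.dist v a < G.dist v₁ a → G.dist v a' < G.dist v₁ a' →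
    G.dist v₁ b < G.dist v b → G.dist v₁ b' < G.dist v b' →
    Transverse G (cls G (v, v₁)) (cls G (a, a')) := by
  intro m
  induction m with
  | zero =>
    intro a a' b b' haa' hbb' d1 d2 d3 d4 s1 s2 s3 s4
    have : a = b := deq0 hG d1
    subst this
    omega
  | succ m ih =>
    intro a a' b b' haa' hbb' d1 d2 d3 d4 s1 s2 s3 s4
    obtain ⟨c, c', hbc, hb'c', hcc', hac, ha'c', hac', ha'c, hcb', hc'b⟩ :=
      ladder_step hG haa' hbb' d1 d2 d3 d4
    have T1 := dsucc hG hvv₁ c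
    have T2 := dsucc hG hvv₁ c'
    have hTaa : Theta G (a, a') (c, c') := by
      rw [theta_char' hG haa' hcc']
      omega
    rcases T1 with t1 | t1
    · rcases T2 with t2 | t2
      · -- both c, c' near v : square crosses the wall
        refine ⟨c, b, c', b', ⟨hbc.symm, ?_⟩, ⟨hb'c'.symm, ?_⟩, ⟨hcc', hTaa⟩,
          ⟨hbb', ?_⟩, hbc.symm, hb'c'.symm, hcc', hbb'⟩
        · rw [theta_char' hG hvv₁ hbc.symm]; omega
        · rw [theta_char' hG hvv₁ hb'c'.symm]; omega
        · rw [theta_mk]; omega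
      · -- mixed : contradiction
        exfalso
        have hTv : Theta G (v, v₁) (c, c') := by
          rw [theta_char' hG hvv₁ hcc']; omega
        have h1 := theta_trans' hG hvv₁ hcc' hTv (g := (a, a')) haa'
        have h2 := theta_trans' hG hcc' haa' (theta_symm hTaa) (g := (a, a')) haa'
        have h3 : Theta G (a, a') (a, a') := theta_self haa'
        have h4 : Theta G (v, v₁) (a, a') := h1.mpr (h2.mpr h3)
        rw [theta_char' hG hvv₁ haa'] at h4
        omega
    · rcases T2 with t2 | t2
      · -- mixed
        exfalso
        have hTv : Theta G (v, v₁) (c, c') := by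
          rw [theta_char' hG hvv₁ hcc']; omega
        have h1 := theta_trans' hG hvv₁ hcc' hTv (g := (a, a')) haa'
        have h2 := theta_trans' hG hcc' haa' (theta_symm hTaa) (g := (a, a')) haa'
        have h3 : Theta G (a, a') (a, a') := theta_self haa'
        have h4 : Theta G (v, v₁) (a, a') := h1.mpr (h2.mpr h3)
        rw [theta_char' hG hvv₁ haa'] at h4
        omega
      · -- both far : recurse
        exact ih a a' c c' haa' hcc' hac ha'c' hac' ha'c s1 s2 (by omega) (by omega)

end MedianDev

namespace MedianDev
variable {G : SimpleGraph V}

lemma wv_injective (hG : IsMedianGraph G) (hext : ∀ x : V, ¬ LinkIsCone G x)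
    {v u : V} (hvu : Wv G v = Wv G u) : v = u := by
  by_contra hne
  obtain ⟨v₁, hvv₁, hd⟩ := exists_first_step hG hne
  apply hext v
  refine ⟨cls G (v, v₁), ⟨⟨(v, v₁), hvv₁, rfl⟩,
    ⟨(v, v₁), ⟨hvv₁, theta_self hvv₁⟩, Or.inl rfl⟩⟩, ?_⟩
  rintro h' ⟨hHyp', hadj'⟩ hne'
  obtain ⟨e'', he'', rfl⟩ := hHyp'
  have h'memu : AdjTo G {f | G.Adj f.1 f.2 ∧ Theta G e'' f} u := by
    have hm : {f | G.Adj f.1 f.2 ∧ Theta G e'' f} ∈ Wv G u := by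
      rw [← hvu]; exact ⟨⟨e'', he'', rfl⟩, hadj'⟩
    exact hm.2
  obtain ⟨w, hw⟩ : ∃ w, (v, w) ∈ cls G e'' := by
    obtain ⟨⟨p, q⟩, hpq, hor⟩ := hadj'
    rcases hor with h | h
    · exact ⟨q, h ▸ hpq⟩
    · exact ⟨p, h ▸ cls_swap hpq⟩
  obtain ⟨z, hz⟩ : ∃ z, (u, z) ∈ cls G e'' := by
    obtain ⟨⟨p, q⟩, hpq, hor⟩ := h'memu
    rcases hor with h | h
    · exact ⟨q, h ▸ hpq⟩
    · exact ⟨p, h ▸ cls_swap hpq⟩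
  have hvw : G.Adj v w := hw.1
  have huz : G.Adj u z := hz.1
  have overlap : ∀ g : V × V, g ∈ cls G (v, v₁) → g ∈ cls G e'' → False := by
    intro g hg1 hg2
    apply hne'
    calc {f | G.Adj f.1 f.2 ∧ Theta G e'' f} = cls G e'' := rfl
      _ = cls G g := cls_eq hG he'' hg2.1 hg2.2
      _ = cls G (v, v₁) := (cls_eq hG hvv₁ hg1.1 hg1.2).symm
  have hdvv : G.dist v v = 0 := SimpleGraph.dist_self
  have hdv₁v : G.dist v₁ v = 1 := dadj hvv₁.symm
  have hdvv₁ : G.dist v v₁ = 1 := dadj hvv₁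
  -- side of w
  have s_w : G.dist v w < G.dist v₁ w := by
    have hnvw : ¬ Theta G (v, v₁) (v, w) := fun hth => overlap (v, w) ⟨hvw, hth⟩ hw
    rw [theta_char' hG hvv₁ hvw] at hnvw
    have := dsucc hG hvv₁ w
    omega
  have s_u : G.dist v₁ u < G.dist v u := by omega
  have s_z : G.dist v₁ z < G.dist v z := by
    have hnuz : ¬ Theta G (v, v₁) (u, z) := fun hth => overlap (u, z) ⟨huz, hth⟩ hz
    rw [theta_char' hG hvv₁ huz] at hnuz
    have := dsucc hG hvv₁ z
    omega
  -- Theta between the two edges of h'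
  have hT : Theta G (v, w) (u, z) :=
    (theta_trans hG (e := e'') (f := (v, w)) he'' hvw hw.2 (u, z) huz).mp hz.2
  rw [theta_mk] at hT
  have F1 := dsucc hG hvw u
  have F2 := dsucc hG hvw z
  have F3 := dsucc hG huz v
  have F4 := dsucc hG huz w
  have c1 : G.dist u v = G.dist v u := dcomm _ _
  have c2 : G.dist z v = G.dist v z := dcomm _ _
  have c3 : G.dist u w = G.dist w u := dcomm _ _
  have c4 : G.dist z w = G.dist w z := dcomm _ _
  have goalrw : {f | G.Adj f.1 f.2 ∧ Theta G e'' f} = cls G (v, w) :=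
    cls_eq hG he'' hvw hw.2
  rw [goalrw]
  have hcase : (G.dist w z = G.dist v u ∧ G.dist v z = G.dist v u + 1 ∧
      G.dist w u = G.dist v u + 1) ∨
      (G.dist w u = G.dist v z ∧ G.dist w z = G.dist v z + 1 ∧
      G.dist v u = G.dist v z + 1) := by omega
  rcases hcase with ⟨k1, k2, k3⟩ | ⟨k1, k2, k3⟩
  · exact transverse_of_sep hG hvv₁ (G.dist v u) v w u z hvw huz rfl k1 k2 k3
      (by omega) s_w s_u s_z
  · exact transverse_of_sep hG hvv₁ (G.dist v z) v w z u hvw huz.symm rfl k1 k3 k2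
      (by omega) s_w s_z s_u

end MedianDev

namespace MedianDev
variable {G : SimpleGraph V}

lemma ical0_iff {w u : Set (V × V)} :
    u ∈ Ical0 G w ↔ (IsHyperplane G u ∧ IsHyperplane G w ∧
      ∀ x, (AdjTo G w x ↔ AdjTo G u x)) := by
  constructor
  · rintro ⟨⟨h1, h2⟩, ⟨h3, h4⟩⟩
    exact ⟨h1, h3, fun x => ⟨h2 x, h4 x⟩⟩
  · rintro ⟨h1, h3, h⟩
    exact ⟨⟨h1, fun x => (h x).mp⟩, ⟨h3, fun x => (h x).mpr⟩⟩

lemma mem_ical0_self {w : Set (V × V)} (h : IsHyperplane G w) : w ∈ Ical0 G w :=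
  ical0_iff.mpr ⟨h, h, fun _ => Iff.rfl⟩

lemma ical0_hyp {w u : Set (V × V)} (h : u ∈ Ical0 G w) : IsHyperplane G u :=
  (ical0_iff.mp h).1

lemma ical0_symm {w u : Set (V × V)} (h : u ∈ Ical0 G w) : w ∈ Ical0 G u := ⟨h.2, h.1⟩

lemma ical0_congr {w u : Set (V × V)} (h : u ∈ Ical0 G w) : Ical0 G u = Ical0 G w := by
  obtain ⟨h1, h2, h3⟩ := ical0_iff.mp h
  ext t
  rw [ical0_iff, ical0_iff]
  constructor
  · rintro ⟨t1, -, t3⟩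
    exact ⟨t1, h2, fun x => (h3 x).trans (t3 x)⟩
  · rintro ⟨t1, -, t3⟩
    exact ⟨t1, h1, fun x => ((h3 x).symm).trans (t3 x)⟩

lemma adjTo_congr {w u : Set (V × V)} (h : u ∈ Ical0 G w) (x : V) :
    AdjTo G u x ↔ AdjTo G w x := ((ical0_iff.mp h).2.2 x).symm

lemma contact_congr {w w' u u' : Set (V × V)} (hw : w' ∈ Ical0 G w) (hu : u' ∈ Ical0 G u) :
    Contact G w' u' ↔ Contact G w u := by
  unfold Contact
  constructor
  · rintro ⟨x, a1, a2⟩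
    exact ⟨x, (adjTo_congr hw x).mp a1, (adjTo_congr hu x).mp a2⟩
  · rintro ⟨x, a1, a2⟩
    exact ⟨x, (adjTo_congr hw x).mpr a1, (adjTo_congr hu x).mpr a2⟩

/-- A permutation of the hyperplanes preserving each `Ical0`-class gives an automorphism
of the contact graph. -/
def permToIso (G : SimpleGraph V) (ψ : Equiv.Perm (Hyp G))
    (hψ : ∀ h : Hyp G, (ψ h).1 ∈ Ical0 G h.1) :
    contactGraph G ≃g contactGraph G :=
  RelIso.mk ψ (by
    intro a b
    show (ψ a ≠ ψ b ∧ Contact G (ψ a).1 (ψ b).1) ↔ (a ≠ b ∧ Contact G a.1 b.1)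
    rw [contact_congr (hψ a) (hψ b)]
    simp [ψ.apply_eq_iff_eq])

lemma permToIso_apply (G : SimpleGraph V) (ψ : Equiv.Perm (Hyp G))
    (hψ : ∀ h : Hyp G, (ψ h).1 ∈ Ical0 G h.1) (h : Hyp G) :
    permToIso G ψ hψ h = ψ h := rfl

end MedianDev

namespace MedianDev
variable {G : SimpleGraph V}

/-- the index type of `Ical0`-classes -/
abbrev Idx (G : SimpleGraph V) := {c : Set (Set (V × V)) // ∃ h : Hyp G, c = Ical0 G h.1}

def clsI (G : SimpleGraph V) (h : Hyp G) : Idx G := ⟨Ical0 G h.1, h, rfl⟩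

lemma mem_clsI (h : Hyp G) : h.1 ∈ (clsI G h).1 := mem_ical0_self h.2

lemma idx_hyp (c : Idx G) (x : ↥c.1) : IsHyperplane G x.1 := by
  obtain ⟨h₀, hc⟩ := c.2
  refine ical0_hyp (w := h₀.1) ?_
  rw [← hc]
  exact x.2

lemma idx_cls_eq (c : Idx G) (x : ↥c.1) : Ical0 G x.1 = c.1 := by
  obtain ⟨h₀, hc⟩ := c.2
  obtain ⟨xv, hxv⟩ := x
  show Ical0 G xv = c.1
  rw [hc] at hxv ⊢
  exact ical0_congr hxv

lemma fam_congr (σ : ∀ c : Idx G, Equiv.Perm ↥c.1) {c₁ c₂ : Idx G} (hc : c₁ = c₂)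
    (x₁ : ↥c₁.1) (x₂ : ↥c₂.1) (hx : (x₁ : Set (V × V)) = (x₂ : Set (V × V))) :
    ((σ c₁ x₁ : ↥c₁.1) : Set (V × V)) = ((σ c₂ x₂ : ↥c₂.1) : Set (V × V)) := by
  subst hc
  have : x₁ = x₂ := Subtype.ext hx
  subst this
  rfl

lemma iso_pres_symm (ψ : contactGraph G ≃g contactGraph G)
    (hψ : ∀ h : Hyp G, (ψ h).1 ∈ Ical0 G h.1) (h : Hyp G) :
    (ψ.symm h).1 ∈ Ical0 G h.1 := by
  have := hψ (ψ.symm h)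
  rw [RelIso.apply_symm_apply] at this
  exact ical0_symm this

/-- restriction of a class-preserving automorphism to one class -/
noncomputable def restr (ψ : contactGraph G ≃g contactGraph G)
    (hψ : ∀ h : Hyp G, (ψ h).1 ∈ Ical0 G h.1) (c : Idx G) : Equiv.Perm ↥c.1 where
  toFun x := ⟨(ψ ⟨x.1, idx_hyp c x⟩).1,
    (idx_cls_eq c x).subset (hψ ⟨x.1, idx_hyp c x⟩)⟩
  invFun x := ⟨(ψ.symm ⟨x.1, idx_hyp c x⟩).1,
    (idx_cls_eq c x).subset (iso_pres_symm ψ hψ ⟨x.1, idx_hyp c x⟩)⟩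
  left_inv x := by
    apply Subtype.ext
    simp only [Subtype.coe_eta, RelIso.symm_apply_apply]
  right_inv x := by
    apply Subtype.ext
    simp only [Subtype.coe_eta, RelIso.apply_symm_apply]

/-- assembling a permutation of the hyperplanes from a family of class permutations -/
noncomputable def build (G : SimpleGraph V) (σ : ∀ c : Idx G, Equiv.Perm ↥c.1) : Equiv.Perm (Hyp G) where
  toFun h := ⟨(σ (clsI G h) ⟨h.1, mem_clsI h⟩).1,
    ical0_hyp (σ (clsI G h) ⟨h.1, mem_clsI h⟩).2⟩
  invFun h := ⟨((σ (clsI G h)).symm ⟨h.1, mem_clsI h⟩).1,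
    ical0_hyp ((σ (clsI G h)).symm ⟨h.1, mem_clsI h⟩).2⟩
  left_inv h := by
    apply Subtype.ext
    have y2 := (σ (clsI G h) ⟨h.1, mem_clsI h⟩).2
    have hc : clsI G (⟨(σ (clsI G h) ⟨h.1, mem_clsI h⟩).1,
        ical0_hyp (σ (clsI G h) ⟨h.1, mem_clsI h⟩).2⟩ : Hyp G) = clsI G h :=
      Subtype.ext (ical0_congr y2)
    refine (fam_congr (fun c => (σ c).symm) hc _
      ⟨(σ (clsI G h) ⟨h.1, mem_clsI h⟩).1, y2⟩ rfl).trans ?_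
    exact congrArg Subtype.val ((σ (clsI G h)).symm_apply_apply ⟨h.1, mem_clsI h⟩)
  right_inv h := by
    apply Subtype.ext
    have y2 := ((σ (clsI G h)).symm ⟨h.1, mem_clsI h⟩).2
    have hc : clsI G (⟨((σ (clsI G h)).symm ⟨h.1, mem_clsI h⟩).1,
        ical0_hyp ((σ (clsI G h)).symm ⟨h.1, mem_clsI h⟩).2⟩ : Hyp G) = clsI G h :=
      Subtype.ext (ical0_congr y2)
    refine (fam_congr σ hc _
      ⟨((σ (clsI G h)).symm ⟨h.1, mem_clsI h⟩).1, y2⟩ rfl).trans ?_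
    exact congrArg Subtype.val ((σ (clsI G h)).apply_symm_apply ⟨h.1, mem_clsI h⟩)

lemma build_pres (G : SimpleGraph V) (σ : ∀ c : Idx G, Equiv.Perm ↥c.1) (h : Hyp G) :
    ((build G σ) h).1 ∈ Ical0 G h.1 :=
  (σ (clsI G h) ⟨h.1, mem_clsI h⟩).2

end MedianDev

namespace MedianDev
variable {G : SimpleGraph V}

lemma induced_one_pres (hG : IsMedianGraph G) (ψ : contactGraph G ≃g contactGraph G)
    (hIP : InducesPerm G ψ 1) : ∀ h : Hyp G, (ψ h).1 ∈ Ical0 G h.1 := by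
  intro h
  rw [ical0_iff]
  refine ⟨(ψ h).2, h.2, fun x => ?_⟩
  have hx := hIP x h
  simp only [Equiv.Perm.one_apply] at hx
  constructor
  · intro ha
    exact (hx.mp ⟨h.2, ha⟩).2
  · intro ha
    exact (hx.mpr ⟨(ψ h).2, ha⟩).2

lemma restr_apply_val (ψ : contactGraph G ≃g contactGraph G)
    (hψ : ∀ h : Hyp G, (ψ h).1 ∈ Ical0 G h.1) (c : Idx G) (x : ↥c.1) :
    ((restr ψ hψ c x : ↥c.1) : Set (V × V)) = (ψ ⟨x.1, idx_hyp c x⟩).1 := rfl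

end MedianDev

/-- the kernel of `ρ : Aut(𝒞(X)) → Sym(X⁰)` is the subgroup `N` of
permutations of the hyperplanes preserving each class `I⁰(w)`; `N` is isomorphic to the
direct product of the symmetric groups `Sym(I⁰(w))`; and `ρ` is injective iff every
`I⁰(w)` is a singleton. -/
theorem kernel_of_rho (G : SimpleGraph V) (hG : IsMedianGraph G)
    (hULF : UnifLocFinite G) (hext : ∀ v : V, ¬ LinkIsCone G v) :
    -- every permutation of the hyperplanes preserving each class I⁰(w) is an
    -- automorphism of the contact graph
    (∀ ψ : Equiv.Perm (Hyp G), (∀ h : Hyp G, (ψ h).1 ∈ Ical0 G h.1) →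
      ∃ Ψ : contactGraph G ≃g contactGraph G, ∀ h : Hyp G, Ψ h = ψ h) ∧
    -- ker ρ = N
    (∀ (ψ : contactGraph G ≃g contactGraph G) (π : Equiv.Perm V),
      InducesPerm G ψ π → (π = 1 ↔ ∀ h : Hyp G, (ψ h).1 ∈ Ical0 G h.1)) ∧
    -- N is isomorphic to the direct product of the symmetric groups Sym(I⁰(w))
    (∃ e : {ψ : contactGraph G ≃g contactGraph G // ∀ h : Hyp G, (ψ h).1 ∈ Ical0 G h.1} ≃
        ((c : {c : Set (Set (V × V)) // ∃ h : Hyp G, c = Ical0 G h.1}) → Equiv.Perm ↥c.1),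
      ∀ ψ₁ ψ₂ ψ₃ : {ψ : contactGraph G ≃g contactGraph G //
          ∀ h : Hyp G, (ψ h).1 ∈ Ical0 G h.1},
        (∀ h : Hyp G, ψ₃.1 h = ψ₂.1 (ψ₁.1 h)) → e ψ₃ = e ψ₂ * e ψ₁) ∧
    -- ρ is injective iff every I⁰(w) is a singleton
    ((∀ (ψ : contactGraph G ≃g contactGraph G) (π : Equiv.Perm V),
        InducesPerm G ψ π → π = 1 → ∀ h : Hyp G, ψ h = h) ↔
      ∀ h : Hyp G, Ical0 G h.1 = {h.1}) := by
  classical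
  open MedianDev in
  refine ⟨?_, ?_, ?_, ?_⟩
  · -- part 1
    intro ψ hψ
    exact ⟨permToIso G ψ hψ, fun h => rfl⟩
  · -- part 2
    intro ψ π hIP
    constructor
    · intro hπ
      subst hπ
      exact induced_one_pres hG ψ hIP
    · intro hψ
      apply Equiv.ext
      intro v
      have hww : Wv G v = Wv G (π v) := by
        ext x
        constructor
        · intro hx
          have hxh : IsHyperplane G x := hx.1
          have h1 := (hIP v ⟨x, hxh⟩).mp hx
          refine ⟨hxh, ?_⟩
          exact (adjTo_congr (hψ ⟨x, hxh⟩) (π v)).mp h1.2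
        · intro hx
          have hxh : IsHyperplane G x := hx.1
          have hsx : ψ (ψ.symm ⟨x, hxh⟩) = ⟨x, hxh⟩ := RelIso.apply_symm_apply ψ ⟨x, hxh⟩
          have h2 : (ψ.symm ⟨x, hxh⟩).1 ∈ Wv G v := by
            refine (hIP v (ψ.symm ⟨x, hxh⟩)).mpr ?_
            rw [hsx]
            exact hx
          have h3 := hψ (ψ.symm ⟨x, hxh⟩)
          rw [hsx] at h3
          exact ⟨hxh, (adjTo_congr h3 v).mpr h2.2⟩
      exact (wv_injective hG hext hww).symm
  · -- part 3
    refine ⟨⟨fun ψN c => restr ψN.1 ψN.2 c,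
        fun σ => ⟨permToIso G (build G σ) (build_pres G σ), build_pres G σ⟩, ?_, ?_⟩, ?_⟩
    · -- left inverse
      intro ψN
      apply Subtype.ext
      apply RelIso.ext
      intro h
      apply Subtype.ext
      show (ψN.1 ⟨h.1, idx_hyp (clsI G h) ⟨h.1, mem_clsI h⟩⟩).1 = (ψN.1 h).1
      exact congrArg (fun t : Hyp G => (ψN.1 t).1) (Subtype.ext rfl)
    · -- right inverse
      intro σ
      funext c
      apply Equiv.ext
      intro x
      apply Subtype.ext
      have hc : clsI G (⟨x.1, idx_hyp c x⟩ : Hyp G) = c := Subtype.ext (idx_cls_eq c x)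
      exact fam_congr σ hc _ ⟨x.1, x.2⟩ rfl
    · -- multiplicativity
      intro ψ₁ ψ₂ ψ₃ hcomp
      funext c
      apply Equiv.ext
      intro x
      apply Subtype.ext
      show (ψ₃.1 ⟨x.1, idx_hyp c x⟩).1 = _
      rw [hcomp ⟨x.1, idx_hyp c x⟩]
      show (ψ₂.1 (ψ₁.1 ⟨x.1, idx_hyp c x⟩)).1
        = (ψ₂.1 ⟨(ψ₁.1 ⟨x.1, idx_hyp c x⟩).1, idx_hyp c (restr ψ₁.1 ψ₁.2 c x)⟩).1
      exact (congrArg (fun t : Hyp G => (ψ₂.1 t).1) (Subtype.ext rfl)).symm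
  · -- part 4
    constructor
    · intro hinj h
      ext u
      simp only [Set.mem_singleton_iff]
      constructor
      · intro hu
        by_contra hne
        have huh : IsHyperplane G u := ical0_hyp hu
        have hUne : (⟨u, huh⟩ : Hyp G) ≠ h := fun he => hne (congrArg Subtype.val he)
        set ψ0 : Equiv.Perm (Hyp G) := Equiv.swap h ⟨u, huh⟩ with hψ0
        have hpres : ∀ h' : Hyp G, (ψ0 h').1 ∈ Ical0 G h'.1 := by
          intro h'
          by_cases e1 : h' = h
          · subst e1
            rw [hψ0, Equiv.swap_apply_left]
            exact hu
          by_cases e2 : h' = ⟨u, huh⟩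
          · subst e2
            rw [hψ0, Equiv.swap_apply_right]
            show h.1 ∈ Ical0 G u
            rw [ical0_congr hu]
            exact mem_ical0_self h.2
          · rw [hψ0, Equiv.swap_apply_of_ne_of_ne e1 e2]
            exact mem_ical0_self h'.2
        have hIP : InducesPerm G (permToIso G ψ0 hpres) 1 := by
          intro v h'
          simp only [Equiv.Perm.one_apply]
          constructor
          · intro hx
            exact ⟨(ψ0 h').2, (adjTo_congr (hpres h') v).mpr hx.2⟩
          · intro hx
            exact ⟨h'.2, (adjTo_congr (hpres h') v).mp hx.2⟩
        have hfix := hinj (permToIso G ψ0 hpres) 1 hIP rfl h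
        have hΨh : permToIso G ψ0 hpres h = (⟨u, huh⟩ : Hyp G) := by
          show ψ0 h = _
          rw [hψ0]
          exact Equiv.swap_apply_left h ⟨u, huh⟩
        rw [hΨh] at hfix
        exact hne (congrArg Subtype.val hfix)
      · intro he
        rw [he]
        exact mem_ical0_self h.2
    · intro hsing ψ π hIP hπ h
      subst hπ
      have hmem := induced_one_pres hG ψ hIP h
      rw [hsing h, Set.mem_singleton_iff] at hmem
      exact Subtype.ext hmem
end
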